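/- arXiv:2310.11908 — 3 statements merged into one kernel-verified Lean document; each statement's English description precedes it below -/
import Mathlib

section
/- Define the First-Come-First-Served (FCFS) policies iteratively: T⁽⁰⁾ = T, and B_i is the set of the top b_i valued tasks in T⁽ⁱ⁻¹⁾ connected to agent a_i (or all such tasks if fewer than b_i), with T⁽ⁱ⁾ = T⁽ⁱ⁻¹⁾ \ B_i; agent a_i's FCFS policy is to report only the edges {(a_i, t) : t ∈ B_i}. Then the union ∪_i FCFSP_i of all FCFS policies is itself a b-matching, and the maximum-weight b-matching mechanism (via BFS or DFS) applied to the input ∪_i FCFSP_i returns exactly ∪_i FCFSP_i. -/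
open Classical

/-- An edge of the bipartite graph: a pair (agent, task). -/
abbrev Edge (n m : ℕ) := Fin n × Fin m

variable {n m : ℕ}

/-- Number of tasks assigned to agent `i` in the edge set `μ`. -/
def deg (μ : Finset (Edge n m)) (i : Fin n) : ℕ := (μ.filter (fun e => e.1 = i)).card

/-- `μ` is a b-matching over the edge set `E'`: it uses only edges of `E'`, each agent `i`
receives at most `b i` tasks, and each task is matched to at most one agent. -/
def IsBMatching (b : Fin n → ℕ) (E' μ : Finset (Edge n m)) : Prop :=
  μ ⊆ E' ∧ (∀ i, deg μ i ≤ b i) ∧ ∀ j : Fin m, (μ.filter (fun e => e.2 = j)).card ≤ 1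

/-- Weight of a matching: total value of matched tasks. -/
noncomputable def weight (q : Fin m → ℝ) (μ : Finset (Edge n m)) : ℝ := ∑ e ∈ μ, q e.2

/-- Utility of agent `i`: total value of the tasks matched to `i`. -/
noncomputable def util (q : Fin m → ℝ) (i : Fin n) (μ : Finset (Edge n m)) : ℝ :=
  ∑ e ∈ μ.filter (fun e => e.1 = i), q e.2

/-- `μ` is a maximum vertex-weighted b-matching over the edge set `E'`. -/
def IsMaxMatching (b : Fin n → ℕ) (q : Fin m → ℝ) (E' μ : Finset (Edge n m)) : Prop :=
  IsBMatching b E' μ ∧ ∀ ν, IsBMatching b E' ν → weight q ν ≤ weight q μ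

/-- The edges of `E` incident to agent `i`. -/
def agentEdges (E : Finset (Edge n m)) (i : Fin n) : Finset (Edge n m) :=
  E.filter (fun e => e.1 = i)

/-- The edge set obtained from `E` when agent `i` reports `S` instead of its true edges. -/
def deviate (E : Finset (Edge n m)) (i : Fin n) (S : Finset (Edge n m)) : Finset (Edge n m) :=
  E.filter (fun e => e.1 ≠ i) ∪ S

/-- A valid report of agent `i`: a nonempty subset of its true incident edges. -/
def ValidReport (E : Finset (Edge n m)) (i : Fin n) (S : Finset (Edge n m)) : Prop :=
  S ⊆ agentEdges E i ∧ S.Nonempty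
open Classical in
/-- The tasks sorted in non-increasing order of value (ties broken by index). -/
noncomputable def sortedTasks (m : ℕ) (q : Fin m → ℝ) : List (Fin m) :=
  List.insertionSort (fun j k => q k ≤ q j) (List.finRange m)

/-- The greedy mechanism `M_AP`: process tasks in non-increasing value order, assigning each
task to the highest-priority unsaturated agent connected to it, if any. -/
noncomputable def MAP (b : Fin n → ℕ) (q : Fin m → ℝ) (E' : Finset (Edge n m)) :
    Finset (Edge n m) :=
  (sortedTasks m q).foldl (fun μ j =>
    match (List.finRange n).find? (fun i => decide ((i, j) ∈ E' ∧ deg μ i < b i)) with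
    | some i => insert (i, j) μ
    | none => μ) ∅

/-- `p = [(i₁,j₁),…,(i_L,j_L)]` is an augmenting path from task `j = j₁` with respect to the
matching `μ` in the graph `E'`: the edges `(i_ℓ, j_ℓ)` are non-matching edges of `E'`, the
edges `(i_ℓ, j_{ℓ+1})` are matching edges, all interior agents are saturated and the final
agent is unsaturated. -/
structure IsAugPathFrom (b : Fin n → ℕ) (E' μ : Finset (Edge n m)) (j : Fin m)
    (p : List (Edge n m)) : Prop where
  ne : p ≠ []
  starts : ∀ e ∈ p.head?, e.2 = j
  mem : ∀ e ∈ p, e ∈ E' ∧ e ∉ μ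
  matched : ∀ k, (h : k + 1 < p.length) →
    ((p.get ⟨k, Nat.lt_of_succ_lt h⟩).1, (p.get ⟨k + 1, h⟩).2) ∈ μ
  satInterior : ∀ k, (h : k + 1 < p.length) →
    b (p.get ⟨k, Nat.lt_of_succ_lt h⟩).1 ≤ deg μ (p.get ⟨k, Nat.lt_of_succ_lt h⟩).1
  unsatLast : ∀ e ∈ p.getLast?, deg μ e.1 < b e.1
  agentsNodup : (p.map Prod.fst).Nodup
  tasksNodup : (p.map Prod.snd).Nodup

/-- The matching edges of an augmenting path. -/
def pathMatched (p : List (Edge n m)) : List (Edge n m) :=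
  (p.zip p.tail).map (fun ef => (ef.1.1, ef.2.2))

/-- Flip an augmenting path: remove its matching edges and add its non-matching edges. -/
def applyPath (μ : Finset (Edge n m)) (p : List (Edge n m)) : Finset (Edge n m) :=
  (μ \ (pathMatched p).toFinset) ∪ p.toFinset

/-- A numeric key realizing the lexicographic order (by vertex indices) on augmenting paths. -/
def pathKey (n m : ℕ) (p : List (Edge n m)) : ℕ :=
  ((p.flatMap fun (e : Edge n m) => [e.1.val + 1, e.2.val + 1]) ++
    List.replicate (2 * n - 2 * p.length) 0).foldl (fun a d => a * (n + m + 2) + d) 0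

/-- DFS explores agents in priority order and goes deep first: it returns the lexicographically
least augmenting path. -/
def dfsCost (n m : ℕ) (p : List (Edge n m)) : ℕ := pathKey n m p

/-- BFS returns a shortest augmenting path, exploring vertices in priority order: it returns
the lexicographically least augmenting path among those of minimum length. -/
def bfsCost (n m : ℕ) (p : List (Edge n m)) : ℕ :=
  p.length * (n + m + 2) ^ (2 * n + 2) + pathKey n m p

/-- Select the cost-minimal augmenting path from task `j`, if an augmenting path exists. -/
noncomputable def selectPath (cost : List (Edge n m) → ℕ) (b : Fin n → ℕ)
    (E' μ : Finset (Edge n m)) (j : Fin m) : Option (List (Edge n m)) :=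
  if h : ∃ p, IsAugPathFrom b E' μ j p ∧ ∀ p', IsAugPathFrom b E' μ j p' → cost p ≤ cost p'
  then some h.choose else none

/-- The augmenting-path algorithm: process tasks in non-increasing value order, at each step
flipping the augmenting path found by the (deterministic) search given by `cost`. -/
noncomputable def runAug (cost : List (Edge n m) → ℕ) (b : Fin n → ℕ) (q : Fin m → ℝ)
    (E' : Finset (Edge n m)) : Finset (Edge n m) :=
  (sortedTasks m q).foldl (fun μ j =>
    match selectPath cost b E' μ j with
    | some p => applyPath μ p
    | none => μ) ∅

/-- The maximum vertex-weighted b-matching mechanism using breadth-first search. -/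
noncomputable def MBFS (b : Fin n → ℕ) (q : Fin m → ℝ) (E' : Finset (Edge n m)) :
    Finset (Edge n m) := runAug (bfsCost n m) b q E'

/-- The maximum vertex-weighted b-matching mechanism using depth-first search. -/
noncomputable def MDFS (b : Fin n → ℕ) (q : Fin m → ℝ) (E' : Finset (Edge n m)) :
    Finset (Edge n m) := runAug (dfsCost n m) b q E'
open Classical in
/-- The top `k` valued tasks (ties broken by index) among a set `c` of tasks. -/
noncomputable def topTasks (q : Fin m → ℝ) (c : Finset (Fin m)) (k : ℕ) : Finset (Fin m) :=
  ((List.insertionSort (fun j j' => q j' ≤ q j)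
    ((List.finRange m).filter (fun j => decide (j ∈ c)))).take k).toFinset

/-- `remTasks b q E k` is the set `T⁽ᵏ⁾` of tasks remaining after the first `k` agents took
their FCFS shares: `T⁽⁰⁾ = T` and `T⁽ⁱ⁾ = T⁽ⁱ⁻¹⁾ \ Bᵢ`. -/
noncomputable def remTasks (b : Fin n → ℕ) (q : Fin m → ℝ) (E : Finset (Edge n m)) :
    ℕ → Finset (Fin m)
  | 0 => Finset.univ
  | k + 1 =>
    if h : k < n then
      remTasks b q E k \
        topTasks q ((remTasks b q E k).filter (fun j => (⟨k, h⟩, j) ∈ E)) (b ⟨k, h⟩)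
    else remTasks b q E k

/-- The First-Come-First-Served policy of agent `i`: report only the edges to its top `b i`
valued tasks among those remaining after the higher-priority agents' FCFS policies. -/
noncomputable def FCFSP (b : Fin n → ℕ) (q : Fin m → ℝ) (E : Finset (Edge n m)) (i : Fin n) :
    Finset (Edge n m) :=
  (topTasks q ((remTasks b q E i.val).filter (fun j => (i, j) ∈ E)) (b i)).image
    (fun j => (i, j))

/-- The union of all agents' FCFS policies. -/
noncomputable def FCFSunion (b : Fin n → ℕ) (q : Fin m → ℝ) (E : Finset (Edge n m)) :
    Finset (Edge n m) :=
  Finset.univ.biUnion (FCFSP b q E)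

section AuxLemmas

lemma topTasks_subset (q : Fin m → ℝ) (c : Finset (Fin m)) (k : ℕ) :
    topTasks q c k ⊆ c := by
  intro j hj
  simp only [topTasks, List.mem_toFinset] at hj
  have h1 : j ∈ List.insertionSort (fun j j' => q j' ≤ q j)
      ((List.finRange m).filter (fun j => decide (j ∈ c))) :=
    List.take_subset _ _ hj
  have h2 := (List.perm_insertionSort (fun j j' => q j' ≤ q j) _).mem_iff.1 h1
  simp only [List.mem_filter, decide_eq_true_eq] at h2
  exact h2.2

lemma topTasks_card_le (q : Fin m → ℝ) (c : Finset (Fin m)) (k : ℕ) :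
    (topTasks q c k).card ≤ k := by
  refine le_trans (List.toFinset_card_le _) ?_
  simp [List.length_take]

lemma remTasks_succ_subset (b : Fin n → ℕ) (q : Fin m → ℝ) (E : Finset (Edge n m)) (k : ℕ) :
    remTasks b q E (k + 1) ⊆ remTasks b q E k := by
  rw [remTasks]
  split
  · exact Finset.sdiff_subset
  · exact Finset.Subset.refl _

lemma remTasks_subset_of_le (b : Fin n → ℕ) (q : Fin m → ℝ) (E : Finset (Edge n m))
    {k k' : ℕ} (h : k ≤ k') : remTasks b q E k' ⊆ remTasks b q E k := by
  induction k' with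
  | zero => simp_all
  | succ k' ih =>
    rcases Nat.lt_or_ge k (k' + 1) with h' | h'
    · exact (remTasks_succ_subset b q E k').trans (ih (Nat.lt_succ_iff.1 h'))
    · have : k = k' + 1 := le_antisymm h h'
      subst this; exact Finset.Subset.refl _

lemma mem_FCFSP (b : Fin n → ℕ) (q : Fin m → ℝ) (E : Finset (Edge n m)) (i : Fin n)
    (e : Edge n m) (he : e ∈ FCFSP b q E i) :
    e.1 = i ∧ e.2 ∈ topTasks q ((remTasks b q E i.val).filter (fun j => (i, j) ∈ E)) (b i) := by
  simp only [FCFSP, Finset.mem_image] at he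
  obtain ⟨j, hj, rfl⟩ := he
  exact ⟨rfl, hj⟩

/-- The task-sets of distinct agents' FCFS policies are disjoint. -/
lemma FCFSP_tasks_disjoint (b : Fin n → ℕ) (q : Fin m → ℝ) (E : Finset (Edge n m))
    {i i' : Fin n} (h : (i : ℕ) < i') {j : Fin m}
    (h1 : (i, j) ∈ FCFSP b q E i) (h2 : (i', j) ∈ FCFSP b q E i') : False := by
  have hj1 := (mem_FCFSP b q E i _ h1).2
  have hj2 := (mem_FCFSP b q E i' _ h2).2
  have hj2' : j ∈ remTasks b q E i'.val :=
    (Finset.mem_filter.1 (topTasks_subset _ _ _ hj2)).1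
  have hsub : remTasks b q E i'.val ⊆ remTasks b q E (i.val + 1) :=
    remTasks_subset_of_le b q E h
  have hmem : j ∈ remTasks b q E (i.val + 1) := hsub hj2'
  rw [remTasks, dif_pos i.isLt] at hmem
  have : (⟨i.val, i.isLt⟩ : Fin n) = i := Fin.eta i i.isLt
  rw [this] at hmem
  exact (Finset.mem_sdiff.1 hmem).2 hj1

lemma FCFSunion_isBMatching (b : Fin n → ℕ) (q : Fin m → ℝ) (E : Finset (Edge n m)) :
    IsBMatching b E (FCFSunion b q E) := by
  refine ⟨?_, ?_, ?_⟩
  · intro e he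
    simp only [FCFSunion, Finset.mem_biUnion, Finset.mem_univ, true_and] at he
    obtain ⟨i, hi⟩ := he
    obtain ⟨h1, h2⟩ := mem_FCFSP b q E i e hi
    have := topTasks_subset _ _ _ h2
    rw [Finset.mem_filter] at this
    have := this.2
    rwa [show (i, e.2) = e by rw [← h1]] at this
  · intro i
    have hfe : (FCFSunion b q E).filter (fun e => e.1 = i) = FCFSP b q E i := by
      ext e
      simp only [Finset.mem_filter, FCFSunion, Finset.mem_biUnion, Finset.mem_univ, true_and]
      constructor
      · rintro ⟨⟨i', hi'⟩, h1⟩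
        have := (mem_FCFSP b q E i' e hi').1
        rw [this] at h1; subst h1; exact hi'
      · intro h
        exact ⟨⟨i, h⟩, (mem_FCFSP b q E i e h).1⟩
    rw [deg, hfe, FCFSP]
    refine le_trans (Finset.card_image_le) (topTasks_card_le _ _ _)
  · intro j
    rw [Finset.card_le_one]
    intro e1 h1 e2 h2
    simp only [Finset.mem_filter, FCFSunion, Finset.mem_biUnion, Finset.mem_univ,
      true_and] at h1 h2
    obtain ⟨⟨i1, hi1⟩, hj1⟩ := h1
    obtain ⟨⟨i2, hi2⟩, hj2⟩ := h2
    have he1 : e1 = (i1, j) := by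
      have := (mem_FCFSP b q E i1 e1 hi1).1
      rw [Prod.ext_iff]; exact ⟨this, hj1⟩
    have he2 : e2 = (i2, j) := by
      have := (mem_FCFSP b q E i2 e2 hi2).1
      rw [Prod.ext_iff]; exact ⟨this, hj2⟩
    subst he1; subst he2
    rcases lt_trichotomy (i1 : ℕ) (i2 : ℕ) with h | h | h
    · exact absurd (FCFSP_tasks_disjoint b q E h hi1 hi2) (fun x => x)
    · rw [Fin.ext_iff.2 h]
    · exact absurd (FCFSP_tasks_disjoint b q E h hi2 hi1) (fun x => x)

/-- Step lemma: when the input graph `E'` has task-degree ≤ 1 and agent-degree ≤ `b`,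
processing task `j` from the partial matching of already-done tasks yields the partial
matching including `j`. -/
lemma step_eq (cost : List (Edge n m) → ℕ) (b : Fin n → ℕ) (E' : Finset (Edge n m))
    (h1 : ∀ i, deg E' i ≤ b i)
    (h2 : ∀ j : Fin m, (E'.filter (fun e => e.2 = j)).card ≤ 1)
    (done : Finset (Fin m)) (j : Fin m) (hj : j ∉ done) :
    (match selectPath cost b E' (E'.filter (fun e => e.2 ∈ done)) j with
     | some p => applyPath (E'.filter (fun e => e.2 ∈ done)) p
     | none => E'.filter (fun e => e.2 ∈ done)) =
    E'.filter (fun e => e.2 ∈ insert j done) := by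
  set μ := E'.filter (fun e => e.2 ∈ done) with hμ
  have hμE : μ ⊆ E' := Finset.filter_subset _ _
  by_cases hex : ∃ e ∈ E', e.2 = j
  · obtain ⟨e0, he0E, he0j⟩ := hex
    -- uniqueness of the edge at task j
    have huniq : ∀ e ∈ E', e.2 = j → e = e0 := by
      intro e heE hej
      have := Finset.card_le_one.1 (h2 j)
      exact this e (Finset.mem_filter.2 ⟨heE, hej⟩) e0 (Finset.mem_filter.2 ⟨he0E, he0j⟩)
    have he0μ : e0 ∉ μ := by
      intro h
      rw [hμ, Finset.mem_filter] at h
      rw [he0j] at h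
      exact hj h.2
    have hdeg : deg μ e0.1 < b e0.1 := by
      refine lt_of_lt_of_le ?_ (h1 e0.1)
      refine Finset.card_lt_card ?_
      constructor
      · exact Finset.filter_subset_filter _ hμE
      · intro hsub
        exact he0μ ((Finset.mem_filter.1 (hsub (Finset.mem_filter.2 ⟨he0E, rfl⟩))).1)
    -- the singleton augmenting path
    have hp0 : IsAugPathFrom b E' μ j [e0] := by
      refine ⟨by simp, ?_, ?_, ?_, ?_, ?_, by simp, by simp⟩
      · intro e he; simp at he; subst he; exact he0j
      · intro e he; simp at he; subst he; exact ⟨he0E, he0μ⟩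
      · intro k hk; simp at hk
      · intro k hk; simp at hk
      · intro e he; simp at he; subst he; exact hdeg
    -- uniqueness of augmenting paths
    have hponly : ∀ p, IsAugPathFrom b E' μ j p → p = [e0] := by
      intro p hp
      -- length is 1
      have hlen : p.length = 1 := by
        by_contra hne
        have hpos : 0 < p.length := List.length_pos_iff.2 hp.ne
        have h2lt : 0 + 1 < p.length := by omega
        have hm := hp.matched 0 h2lt
        have hmem1 := hp.mem (p.get ⟨0+1, h2lt⟩) (p.get_mem ⟨0+1, h2lt⟩)
        have heq : ((p.get ⟨0, by omega⟩).1, (p.get ⟨0+1, h2lt⟩).2) = p.get ⟨0+1, h2lt⟩ := by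
          have hA : ((p.get ⟨0, by omega⟩).1, (p.get ⟨0+1, h2lt⟩).2) ∈
              E'.filter (fun e => e.2 = (p.get ⟨0+1, h2lt⟩).2) :=
            Finset.mem_filter.2 ⟨hμE hm, rfl⟩
          have hB : p.get ⟨0+1, h2lt⟩ ∈ E'.filter (fun e => e.2 = (p.get ⟨0+1, h2lt⟩).2) :=
            Finset.mem_filter.2 ⟨hmem1.1, rfl⟩
          exact Finset.card_le_one.1 (h2 _) _ hA _ hB
        rw [heq] at hm
        exact hmem1.2 hm
      obtain ⟨a, rfl⟩ := List.length_eq_one_iff.1 hlen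
      have haj : a.2 = j := hp.starts a rfl
      have haE : a ∈ E' := (hp.mem a (by simp)).1
      rw [huniq a haE haj]
    -- selectPath returns some path, which must be [e0]
    have hcond : ∃ p, IsAugPathFrom b E' μ j p ∧
        ∀ p', IsAugPathFrom b E' μ j p' → cost p ≤ cost p' := by
      refine ⟨[e0], hp0, ?_⟩
      intro p' hp'
      rw [hponly p' hp']
    rw [selectPath, dif_pos hcond]
    have hch := hcond.choose_spec.1
    rw [hponly _ hch]
    have happ : applyPath μ [e0] = insert e0 μ := by
      ext e; simp [applyPath, pathMatched, or_comm]
    show applyPath μ [e0] = E'.filter (fun e => e.2 ∈ insert j done)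
    rw [happ]
    ext e
    simp only [Finset.mem_insert, hμ, Finset.mem_filter]
    constructor
    · rintro (rfl | ⟨heE, hed⟩)
      · exact ⟨he0E, Or.inl he0j⟩
      · exact ⟨heE, Or.inr hed⟩
    · rintro ⟨heE, (hej | hed)⟩
      · exact Or.inl (huniq e heE hej)
      · exact Or.inr ⟨heE, hed⟩
  · -- no edge at task j : no augmenting path
    push_neg at hex
    have hno : ¬ ∃ p, IsAugPathFrom b E' μ j p ∧
        ∀ p', IsAugPathFrom b E' μ j p' → cost p ≤ cost p' := by
      rintro ⟨p, hp, -⟩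
      obtain ⟨e, t, rfl⟩ := List.exists_cons_of_ne_nil hp.ne
      have hej := hp.starts e rfl
      have heE := (hp.mem e (by simp)).1
      exact hex e heE hej
    rw [selectPath, dif_neg hno]
    show μ = E'.filter (fun e => e.2 ∈ insert j done)
    ext e
    simp only [hμ, Finset.mem_filter, Finset.mem_insert]
    constructor
    · rintro ⟨heE, hed⟩; exact ⟨heE, Or.inr hed⟩
    · rintro ⟨heE, (hej | hed)⟩
      · exact absurd hej (hex e heE)
      · exact ⟨heE, hed⟩

lemma foldl_step_eq (cost : List (Edge n m) → ℕ) (b : Fin n → ℕ) (E' : Finset (Edge n m))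
    (h1 : ∀ i, deg E' i ≤ b i)
    (h2 : ∀ j : Fin m, (E'.filter (fun e => e.2 = j)).card ≤ 1) :
    ∀ (L : List (Fin m)) (done : Finset (Fin m)), L.Nodup → (∀ j ∈ L, j ∉ done) →
    L.foldl (fun μ j =>
      match selectPath cost b E' μ j with
      | some p => applyPath μ p
      | none => μ) (E'.filter (fun e => e.2 ∈ done)) =
    E'.filter (fun e => e.2 ∈ done ∪ L.toFinset) := by
  intro L
  induction L with
  | nil => intro done _ _; simp
  | cons j L ih =>
    intro done hnd hdisj
    rw [List.foldl_cons, step_eq cost b E' h1 h2 done j (hdisj j (by simp))]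
    rw [ih (insert j done) hnd.of_cons ?_]
    · congr 1
      ext j'
      simp only [Finset.mem_union, Finset.mem_insert, List.toFinset_cons, List.mem_toFinset]
      tauto
    · intro j' hj'
      simp only [Finset.mem_insert]
      push_neg
      exact ⟨fun h => (List.nodup_cons.1 hnd).1 (h ▸ hj'), hdisj j' (by simp [hj'])⟩

lemma runAug_eq_self (cost : List (Edge n m) → ℕ) (b : Fin n → ℕ) (q : Fin m → ℝ)
    (E' : Finset (Edge n m)) (h1 : ∀ i, deg E' i ≤ b i)
    (h2 : ∀ j : Fin m, (E'.filter (fun e => e.2 = j)).card ≤ 1) :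
    runAug cost b q E' = E' := by
  have hperm := List.perm_insertionSort (fun j k => q k ≤ q j) (List.finRange m)
  have hnd : (sortedTasks m q).Nodup := by
    rw [sortedTasks]
    exact hperm.nodup_iff.2 (List.nodup_finRange m)
  have h0 : (∅ : Finset (Edge n m)) = E'.filter (fun e => e.2 ∈ (∅ : Finset (Fin m))) := by
    simp
  rw [runAug, h0, foldl_step_eq cost b E' h1 h2 (sortedTasks m q) ∅ hnd (by simp)]
  have hall : ∀ j : Fin m, j ∈ (sortedTasks m q).toFinset := by
    intro j
    rw [List.mem_toFinset, sortedTasks, hperm.mem_iff]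
    exact List.mem_finRange j
  rw [Finset.filter_true_of_mem]
  intro e _
  simp [hall e.2]

end AuxLemmas

/-- The union of the agents' First-Come-First-Served policies is itself a
b-matching (over the true edge set), and the maximum-weight b-matching mechanism — via BFS or
DFS — applied to the input `∪ᵢ FCFSPᵢ` returns exactly `∪ᵢ FCFSPᵢ`. -/
theorem FCFS_union_is_fixed_point (n m : ℕ) (b : Fin n → ℕ) (q : Fin m → ℝ)
    (hq : ∀ j, 0 < q j) (E : Finset (Edge n m)) :
    IsBMatching b E (FCFSunion b q E) ∧
    MBFS b q (FCFSunion b q E) = FCFSunion b q E ∧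
    MDFS b q (FCFSunion b q E) = FCFSunion b q E := by
  have hbm := FCFSunion_isBMatching b q E
  exact ⟨hbm, runAug_eq_self _ b q _ hbm.2.1 hbm.2.2,
    runAug_eq_self _ b q _ hbm.2.1 hbm.2.2⟩
end

section
/- Both M_BFS and M_DFS have Price of Anarchy exactly 2 in the edge-reporting game: the supremum over instances of the ratio between the maximum-weight b-matching value and the social welfare at the worst pure Nash equilibrium equals 2. The lower bound is witnessed, for every ε > 0, by two agents of capacity 1, tasks of values 1+ε and 1, and edges {(a_1,t_1),(a_1,t_2),(a_2,t_1)}, where the worst equilibrium has welfare 1+ε while the optimum is 2+ε. -/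
open Classical

variable {n m : ℕ}

/-- The edge set reported to the mechanism when agents play the strategy profile `D`. -/
def profileInput (D : Fin n → Finset (Edge n m)) : Finset (Edge n m) :=
  Finset.univ.biUnion D

/-- The profile `D` is a pure Nash equilibrium of the edge-reporting game with true edge set
`E` induced by the mechanism `M`: each strategy is a nonempty subset of the agent's true
incident edges, and no agent can strictly increase its utility by a unilateral deviation. -/
def IsNE (M : Finset (Edge n m) → Finset (Edge n m)) (q : Fin m → ℝ)
    (E : Finset (Edge n m)) (D : Fin n → Finset (Edge n m)) : Prop :=
  (∀ i, D i ⊆ agentEdges E i ∧ (D i).Nonempty) ∧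
  ∀ i S, S ⊆ agentEdges E i → S.Nonempty →
    util q i (M (profileInput (Function.update D i S))) ≤ util q i (M (profileInput D))

namespace PoA
open Finset

variable {n m : ℕ}

/-- matched tasks -/
def mt (μ : Finset (Edge n m)) : Finset (Fin m) := μ.image Prod.snd

/-- C is exactly coverable -/
def Cov (b : Fin n → ℕ) (E' : Finset (Edge n m)) (C : Finset (Fin m)) : Prop :=
  ∃ μ, IsBMatching b E' μ ∧ mt μ = C

lemma task_inj {b : Fin n → ℕ} {E' μ : Finset (Edge n m)} (h : IsBMatching b E' μ)
    {e f : Edge n m} (he : e ∈ μ) (hf : f ∈ μ) (hef : e.2 = f.2) : e = f := by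
  have h1 := h.2.2 e.2
  rw [Finset.card_le_one] at h1
  exact h1 e (Finset.mem_filter.2 ⟨he, rfl⟩) f (Finset.mem_filter.2 ⟨hf, hef.symm⟩)

lemma mem_mt {μ : Finset (Edge n m)} {t : Fin m} :
    t ∈ mt μ ↔ ∃ e ∈ μ, e.2 = t := by
  constructor
  · intro h
    obtain ⟨e, he, rfl⟩ := Finset.mem_image.1 h
    exact ⟨e, he, rfl⟩
  · rintro ⟨e, he, rfl⟩
    exact Finset.mem_image.2 ⟨e, he, rfl⟩

lemma card_mt {b : Fin n → ℕ} {E' μ : Finset (Edge n m)} (h : IsBMatching b E' μ) :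
    (mt μ).card = μ.card :=
  Finset.card_image_of_injOn (fun e he f hf hef => task_inj h he hf hef)

lemma weight_eq_sum_mt {b : Fin n → ℕ} {E' μ : Finset (Edge n m)} (q : Fin m → ℝ)
    (h : IsBMatching b E' μ) : weight q μ = ∑ t ∈ mt μ, q t := by
  rw [mt, Finset.sum_image (fun e he f hf hef => task_inj h he hf hef)]
  rfl

lemma weight_eq_sum_util (q : Fin m → ℝ) (μ : Finset (Edge n m)) :
    weight q μ = ∑ i, util q i μ := by
  rw [weight, ← Finset.sum_fiberwise μ Prod.fst (fun e => q e.2)]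
  rfl

/-- restriction of a matching to a subset of its matched tasks -/
lemma cov_subset {b : Fin n → ℕ} {E' : Finset (Edge n m)} {C D : Finset (Fin m)}
    (h : Cov b E' C) (hDC : D ⊆ C) : Cov b E' D := by
  obtain ⟨μ, hμ, hmt⟩ := h
  refine ⟨μ.filter (fun e => e.2 ∈ D), ⟨?_, fun i => ?_, fun t => ?_⟩, ?_⟩
  · exact (Finset.filter_subset _ _).trans hμ.1
  · refine Nat.le_trans (Finset.card_le_card ?_) (hμ.2.1 i)
    intro e he
    simp only [deg, Finset.mem_filter] at he ⊢
    exact ⟨he.1.1, he.2⟩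
  · refine Nat.le_trans (Finset.card_le_card ?_) (hμ.2.2 t)
    intro e he
    simp only [Finset.mem_filter] at he ⊢
    exact ⟨he.1.1, he.2⟩
  · apply Finset.Subset.antisymm
    · intro t ht
      obtain ⟨e, he, rfl⟩ := mem_mt.1 ht
      exact (Finset.mem_filter.1 he).2
    · intro t ht
      have : t ∈ mt μ := hmt ▸ hDC ht
      obtain ⟨e, he, rfl⟩ := mem_mt.1 this
      exact mem_mt.2 ⟨e, Finset.mem_filter.2 ⟨he, ht⟩, rfl⟩

lemma deg_le_of_subset {μ ν : Finset (Edge n m)} (h : μ ⊆ ν) (i : Fin n) :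
    deg μ i ≤ deg ν i :=
  Finset.card_le_card (Finset.filter_subset_filter _ h)

lemma bmatching_subset {b : Fin n → ℕ} {E' μ ν : Finset (Edge n m)}
    (h : IsBMatching b E' ν) (hsub : μ ⊆ ν) : IsBMatching b E' μ :=
  ⟨hsub.trans h.1, fun i => (deg_le_of_subset hsub i).trans (h.2.1 i),
   fun t => Nat.le_trans (Finset.card_le_card (Finset.filter_subset_filter _ hsub)) (h.2.2 t)⟩

lemma card_filter_agents {b : Fin n → ℕ} {E' μ : Finset (Edge n m)}
    (_h : IsBMatching b E' μ) (RA : Finset (Fin n)) :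
    (μ.filter (fun e => e.1 ∈ RA)).card = ∑ a ∈ RA, deg μ a := by
  simp only [deg]
  rw [← Finset.card_biUnion (by
    intro a _ a' _ hne
    simp only [Finset.disjoint_left, Finset.mem_filter]
    rintro e ⟨_, h1⟩ ⟨_, h2⟩
    exact hne (h1 ▸ h2 ▸ rfl))]
  congr 1
  ext e
  simp only [Finset.mem_filter, Finset.mem_biUnion]
  constructor
  · rintro ⟨he, ha⟩; exact ⟨e.1, ha, he, rfl⟩
  · rintro ⟨a, ha, he, rfl⟩; exact ⟨he, ha⟩

/-- counting: tasks of X all matched (in ν) into agents of RA -/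
lemma card_into {b : Fin n → ℕ} {E' ν : Finset (Edge n m)} (hν : IsBMatching b E' ν)
    {X : Finset (Fin m)} {RA : Finset (Fin n)} (hX : X ⊆ mt ν)
    (hcl : ∀ e ∈ ν, e.2 ∈ X → e.1 ∈ RA) : X.card ≤ ∑ a ∈ RA, b a := by
  have h1 : X ⊆ mt (ν.filter (fun e => e.1 ∈ RA)) := by
    intro t ht
    obtain ⟨e, he, rfl⟩ := mem_mt.1 (hX ht)
    exact mem_mt.2 ⟨e, Finset.mem_filter.2 ⟨he, hcl e he ht⟩, rfl⟩
  calc X.card ≤ (mt (ν.filter (fun e => e.1 ∈ RA))).card := Finset.card_le_card h1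
    _ = (ν.filter (fun e => e.1 ∈ RA)).card :=
        card_mt (bmatching_subset hν (Finset.filter_subset _ _))
    _ = ∑ a ∈ RA, deg ν a := card_filter_agents hν RA
    _ ≤ ∑ a ∈ RA, b a := Finset.sum_le_sum (fun a _ => hν.2.1 a)

lemma card_mt_filter_sat {b : Fin n → ℕ} {E' μ : Finset (Edge n m)}
    (hμ : IsBMatching b E' μ) {RA : Finset (Fin n)} (hsat : ∀ a ∈ RA, b a ≤ deg μ a) :
    (mt (μ.filter (fun e => e.1 ∈ RA))).card = ∑ a ∈ RA, b a := by
  rw [card_mt (bmatching_subset hμ (Finset.filter_subset _ _)), card_filter_agents hμ RA]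
  exact Finset.sum_congr rfl (fun a ha => Nat.le_antisymm (hμ.2.1 a) (hsat a ha))

end PoA
namespace PoA
open Finset

variable {n m : ℕ}

@[simp] lemma pathMatched_nil : pathMatched ([] : List (Edge n m)) = [] := rfl
@[simp] lemma pathMatched_single (e : Edge n m) : pathMatched [e] = [] := rfl
@[simp] lemma pathMatched_cons_cons (e f : Edge n m) (r : List (Edge n m)) :
    pathMatched (e :: f :: r) = (e.1, f.2) :: pathMatched (f :: r) := rfl

lemma pathMatched_fst {p : List (Edge n m)} {x : Edge n m} (hx : x ∈ pathMatched p) :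
    x.1 ∈ p.map Prod.fst := by
  induction p with
  | nil => simp at hx
  | cons e l ih =>
    cases l with
    | nil => simp at hx
    | cons f r =>
      rw [pathMatched_cons_cons] at hx
      rcases List.mem_cons.1 hx with h | h
      · subst h; simp
      · simp only [List.map_cons, List.mem_cons]
        right
        simpa using ih h

lemma deg_insert {μ : Finset (Edge n m)} {e : Edge n m} (he : e ∉ μ) (x : Fin n) :
    deg (insert e μ) x = if e.1 = x then deg μ x + 1 else deg μ x := by
  simp only [deg, Finset.filter_insert]
  by_cases h : e.1 = x
  · rw [if_pos h, if_pos h, Finset.card_insert_of_notMem (fun hc => he (Finset.mem_filter.1 hc).1)]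
  · rw [if_neg h, if_neg h]

lemma deg_erase {μ : Finset (Edge n m)} {c : Edge n m} (hc : c ∈ μ) (x : Fin n) :
    deg (μ.erase c) x = if c.1 = x then deg μ x - 1 else deg μ x := by
  simp only [deg, Finset.filter_erase]
  by_cases h : c.1 = x
  · rw [if_pos h, Finset.card_erase_of_mem (Finset.mem_filter.2 ⟨hc, h⟩)]
  · rw [if_neg h]
    have hcf : c ∉ μ.filter (fun e => e.1 = x) := fun hm => h (Finset.mem_filter.1 hm).2
    rw [Finset.erase_eq_of_notMem hcf]

lemma unmatched_not_mem {μ : Finset (Edge n m)} {j : Fin m} (hj : j ∉ mt μ)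
    {e : Edge n m} (he : e ∈ μ) : e.2 ≠ j := fun h => hj (mem_mt.2 ⟨e, he, h⟩)

/-- Core 2: flipping an augmenting path. -/
lemma core2 {b : Fin n → ℕ} {E' : Finset (Edge n m)} :
    ∀ (p : List (Edge n m)) (μ : Finset (Edge n m)) (j : Fin m),
      IsBMatching b E' μ → j ∉ mt μ → IsAugPathFrom b E' μ j p →
      IsBMatching b E' (applyPath μ p) ∧ mt (applyPath μ p) = insert j (mt μ) := by
  intro p
  induction p with
  | nil => intro μ j _ _ hp; exact absurd rfl hp.ne
  | cons e l ih =>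
    intro μ j hμ hj hp
    have hej : e.2 = j := hp.starts e (by simp)
    have heE : e ∈ E' ∧ e ∉ μ := hp.mem e (by simp)
    cases l with
    | nil =>
      -- base case: single edge
      have happ : applyPath μ [e] = insert e μ := by
        ext x; simp [applyPath, or_comm]
      have hlast : deg μ e.1 < b e.1 := hp.unsatLast e (by simp)
      constructor
      · rw [happ]
        refine ⟨?_, fun x => ?_, fun t => ?_⟩
        · exact Finset.insert_subset heE.1 hμ.1
        · rw [deg_insert heE.2]
          split
          · next h => subst h; omega
          · exact hμ.2.1 x
        · by_cases ht : t = j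
          · rw [ht]
            have : (insert e μ).filter (fun f => f.2 = j) ⊆ {e} := by
              intro g hg
              rw [Finset.mem_filter, Finset.mem_insert] at hg
              rcases hg.1 with h | h
              · simpa using h
              · exact absurd hg.2 (unmatched_not_mem hj h)
            simpa using Finset.card_le_card this
          · refine Nat.le_trans (Finset.card_le_card ?_) (hμ.2.2 t)
            intro g hg
            rw [Finset.mem_filter, Finset.mem_insert] at hg
            rcases hg.1 with rfl | h
            · exact absurd (by rw [← hg.2, hej]) ht
            · exact Finset.mem_filter.2 ⟨h, hg.2⟩
      · rw [happ, mt, Finset.image_insert, hej, mt]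
    | cons f r =>
      -- inductive step
      set c : Edge n m := (e.1, f.2) with hc
      have hcμ : c ∈ μ := by
        have := hp.matched 0 (by simp)
        simpa using this
      have hfj : f.2 ≠ j := by
        have h2 := hp.tasksNodup
        rw [List.map_cons, List.nodup_cons] at h2
        intro h
        apply h2.1
        rw [hej, ← h]
        exact List.mem_map_of_mem (f := Prod.snd) List.mem_cons_self
      have hanodup := hp.agentsNodup
      have he1 : e.1 ∉ (f :: r).map Prod.fst := by
        simp only [List.map_cons, List.nodup_cons] at hanodup
        exact hanodup.1
      have hec : e ≠ c := by
        intro h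
        exact hfj (by rw [← hej, h])
      set μ₁ : Finset (Edge n m) := insert e (μ.erase c) with hμ₁
      have heν : e ∉ μ.erase c := fun h => heE.2 (Finset.mem_erase.1 h).2
      have hdeg : ∀ x, deg μ₁ x = deg μ x := by
        intro x
        rw [hμ₁, deg_insert heν, deg_erase hcμ]
        by_cases h : e.1 = x
        · rw [if_pos h, if_pos h]
          have : 1 ≤ deg μ x := by
            rw [← h]
            exact Finset.card_pos.2 ⟨c, Finset.mem_filter.2 ⟨hcμ, rfl⟩⟩
          omega
        · rw [if_neg h, if_neg h]
      -- the unique edge matched to f.2 in μ is c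
      have huniq : ∀ g ∈ μ, g.2 = f.2 → g = c := fun g hg hgt =>
        task_inj hμ hg hcμ hgt
      have hmtν : mt μ₁ = insert j ((mt μ).erase f.2) := by
        rw [hμ₁, mt, Finset.image_insert, hej]
        congr 1
        ext t
        simp only [Finset.mem_image, Finset.mem_erase]
        constructor
        · rintro ⟨g, ⟨hgc, hgμ⟩, rfl⟩
          refine ⟨fun h => hgc (huniq g hgμ h), mem_mt.2 ⟨g, hgμ, rfl⟩⟩
        · rintro ⟨htf, ht⟩
          obtain ⟨g, hg, rfl⟩ := mem_mt.1 ht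
          refine ⟨g, ⟨fun h => htf ?_, hg⟩, rfl⟩
          rw [hc] at h
          rw [h]
      have hμ₁match : IsBMatching b E' μ₁ := by
        refine ⟨?_, fun x => ?_, fun t => ?_⟩
        · exact Finset.insert_subset heE.1 ((Finset.erase_subset _ _).trans hμ.1)
        · rw [hdeg x]; exact hμ.2.1 x
        · by_cases ht : t = j
          · rw [ht]
            have : μ₁.filter (fun g => g.2 = j) ⊆ {e} := by
              intro g hg
              rw [Finset.mem_filter, hμ₁, Finset.mem_insert] at hg
              rcases hg.1 with h | h
              · simpa using h
              · exact absurd hg.2 (unmatched_not_mem hj (Finset.mem_of_mem_erase h))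
            simpa using Finset.card_le_card this
          · refine Nat.le_trans (Finset.card_le_card ?_) (hμ.2.2 t)
            intro g hg
            rw [Finset.mem_filter, hμ₁, Finset.mem_insert] at hg
            rcases hg.1 with rfl | h
            · exact absurd (by rw [← hg.2, hej]) ht
            · exact Finset.mem_filter.2 ⟨Finset.mem_of_mem_erase h, hg.2⟩
      have hf2ν : f.2 ∉ mt μ₁ := by
        rw [hmtν]
        simp only [Finset.mem_insert, Finset.mem_erase]
        push_neg
        exact ⟨hfj, fun h => absurd rfl h⟩
      -- the tail is an augmenting path from f.2 w.r.t. μ₁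
      have hpath : IsAugPathFrom b E' μ₁ f.2 (f :: r) := by
        refine ⟨by simp, ?_, ?_, ?_, ?_, ?_, ?_, ?_⟩
        · intro g hg; simp at hg; rw [hg]
        · intro g hg
          have hg' : g ∈ e :: f :: r := List.mem_cons_of_mem _ hg
          refine ⟨(hp.mem g hg').1, ?_⟩
          intro hgν
          rw [hμ₁, Finset.mem_insert] at hgν
          rcases hgν with h | h
          · -- g = e impossible: e.2 = j would appear twice among tasks
            have h2 := hp.tasksNodup
            rw [List.map_cons, List.nodup_cons] at h2
            apply h2.1
            rw [← h]
            exact List.mem_map_of_mem (f := Prod.snd) hg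
          · exact (hp.mem g hg').2 (Finset.mem_erase.1 h).2
        · intro k hk
          have hk' : (k + 1) + 1 < (e :: f :: r).length := by
            simp only [List.length_cons] at hk ⊢; omega
          have hm := hp.matched (k + 1) hk'
          have hget1 : (e :: f :: r).get ⟨k + 1, Nat.lt_of_succ_lt hk'⟩
              = (f :: r).get ⟨k, Nat.lt_of_succ_lt hk⟩ := rfl
          have hget2 : (e :: f :: r).get ⟨k + 1 + 1, hk'⟩
              = (f :: r).get ⟨k + 1, hk⟩ := rfl
          rw [hget1, hget2] at hm
          rw [hμ₁, Finset.mem_insert, Finset.mem_erase]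
          right
          refine ⟨?_, hm⟩
          -- agent of this matched edge is a tail agent, hence ≠ e.1
          intro hcon
          apply he1
          rw [hc, Prod.mk.injEq] at hcon
          rw [← hcon.1]
          exact List.mem_map_of_mem (f := Prod.fst) (List.get_mem _ _)
        · intro k hk
          have hk' : (k + 1) + 1 < (e :: f :: r).length := by
            simp only [List.length_cons] at hk ⊢; omega
          have := hp.satInterior (k + 1) hk'
          have hget1 : (e :: f :: r).get ⟨k + 1, Nat.lt_of_succ_lt hk'⟩
              = (f :: r).get ⟨k, Nat.lt_of_succ_lt hk⟩ := rfl
          rw [hget1] at this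
          rw [hdeg]
          exact this
        · intro g hg
          rw [hdeg]
          exact hp.unsatLast g (by rwa [List.getLast?_cons_cons])
        · exact hp.agentsNodup.of_cons
        · exact hp.tasksNodup.of_cons
      obtain ⟨hres, hresmt⟩ := ih μ₁ f.2 hμ₁match hf2ν hpath
      have happeq : applyPath μ (e :: f :: r) = applyPath μ₁ (f :: r) := by
        have hepm' : e ∉ pathMatched (f :: r) := fun h => he1 (pathMatched_fst h)
        ext g
        constructor
        · intro hg
          rcases Finset.mem_union.1 hg with hg | hg
          · obtain ⟨hgμ, hgpm⟩ := Finset.mem_sdiff.1 hg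
            rw [List.mem_toFinset, pathMatched_cons_cons, List.mem_cons] at hgpm
            push_neg at hgpm
            apply Finset.mem_union_left
            rw [Finset.mem_sdiff, List.mem_toFinset]
            refine ⟨?_, hgpm.2⟩
            rw [hμ₁, Finset.mem_insert]
            exact Or.inr (Finset.mem_erase.2 ⟨hgpm.1, hgμ⟩)
          · rw [List.mem_toFinset, List.mem_cons] at hg
            rcases hg with rfl | hg
            · apply Finset.mem_union_left
              rw [Finset.mem_sdiff, List.mem_toFinset]
              exact ⟨by rw [hμ₁]; exact Finset.mem_insert_self _ _, hepm'⟩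
            · exact Finset.mem_union_right _ (List.mem_toFinset.2 hg)
        · intro hg
          rcases Finset.mem_union.1 hg with hg | hg
          · obtain ⟨hgμ₁, hgpm⟩ := Finset.mem_sdiff.1 hg
            rw [List.mem_toFinset] at hgpm
            rw [hμ₁, Finset.mem_insert] at hgμ₁
            rcases hgμ₁ with rfl | hgμ₁
            · exact Finset.mem_union_right _ (List.mem_toFinset.2 List.mem_cons_self)
            · apply Finset.mem_union_left
              rw [Finset.mem_sdiff, List.mem_toFinset, pathMatched_cons_cons, List.mem_cons]
              push_neg
              exact ⟨Finset.mem_of_mem_erase hgμ₁, Finset.ne_of_mem_erase hgμ₁, hgpm⟩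
          · rw [List.mem_toFinset] at hg
            exact Finset.mem_union_right _ (List.mem_toFinset.2 (List.mem_cons_of_mem _ hg))
      rw [happeq]
      refine ⟨hres, ?_⟩
      rw [hresmt, hmtν]
      have hf2μ : f.2 ∈ mt μ := mem_mt.2 ⟨c, hcμ, rfl⟩
      ext t
      simp only [Finset.mem_insert, Finset.mem_erase]
      constructor
      · rintro (rfl | rfl | ⟨_, h⟩)
        · exact Or.inr hf2μ
        · exact Or.inl rfl
        · exact Or.inr h
      · rintro (rfl | h)
        · exact Or.inr (Or.inl rfl)
        · by_cases hh : t = f.2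
          · exact Or.inl hh
          · exact Or.inr (Or.inr ⟨hh, h⟩)

end PoA
namespace PoA
open Finset

variable {n m : ℕ}

def reachStep (E' μ : Finset (Edge n m)) (R : Finset (Fin n)) : Finset (Fin n) :=
  R ∪ (E'.filter (fun e => e.2 ∈ mt (μ.filter (fun f => f.1 ∈ R)))).image Prod.fst

def reachN (E' μ : Finset (Edge n m)) (j : Fin m) : ℕ → Finset (Fin n)
  | 0 => (E'.filter (fun e => e.2 = j)).image Prod.fst
  | (k+1) => reachStep E' μ (reachN E' μ j k)

lemma reach_mono (E' μ : Finset (Edge n m)) (j : Fin m) (k : ℕ) :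
    reachN E' μ j k ⊆ reachN E' μ j (k+1) := by
  intro a ha
  exact Finset.mem_union_left _ ha

lemma reach_le (E' μ : Finset (Edge n m)) (j : Fin m) {k l : ℕ} (h : k ≤ l) :
    reachN E' μ j k ⊆ reachN E' μ j l := by
  induction l with
  | zero => rw [Nat.le_zero.1 h]
  | succ l ih =>
    rcases Nat.lt_or_ge k (l+1) with h' | h'
    · exact (ih (Nat.lt_succ_iff.1 h')).trans (reach_mono E' μ j l)
    · rw [Nat.le_antisymm h h']

lemma reach_stab (E' μ : Finset (Edge n m)) (j : Fin m) :
    reachN E' μ j (n+1) = reachN E' μ j n := by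
  -- there is a stabilization point k ≤ n
  have key : ∃ k ≤ n, reachN E' μ j (k+1) = reachN E' μ j k := by
    by_contra hcon
    push_neg at hcon
    have grow : ∀ k, k ≤ n + 1 → k ≤ (reachN E' μ j k).card := by
      intro k
      induction k with
      | zero => intro _; exact Nat.zero_le _
      | succ k ih =>
        intro hk
        have h1 : k ≤ (reachN E' μ j k).card := ih (Nat.le_of_succ_le hk)
        have h2 : reachN E' μ j k ⊂ reachN E' μ j (k+1) :=
          Finset.ssubset_iff_subset_ne.2 ⟨reach_mono E' μ j k,
            fun h => hcon k (Nat.succ_le_succ_iff.1 hk) h.symm⟩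
        have := Finset.card_lt_card h2
        omega
    have h1 := grow (n+1) le_rfl
    have h2 : (reachN E' μ j (n+1)).card ≤ n := by
      have := Finset.card_le_card (Finset.subset_univ (reachN E' μ j (n+1)))
      simpa using this
    omega
  obtain ⟨k, hk, hstab⟩ := key
  have forever : ∀ l, k ≤ l → reachN E' μ j l = reachN E' μ j k := by
    intro l
    induction l with
    | zero => intro h; rw [Nat.le_zero.1 h]
    | succ l ih =>
      intro h
      rcases Nat.lt_or_ge k (l+1) with h' | h'
      · have hl : reachN E' μ j l = reachN E' μ j k := ih (Nat.lt_succ_iff.1 h')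
        show reachStep E' μ (reachN E' μ j l) = _
        rw [hl]
        exact hstab
      · rw [Nat.le_antisymm h h']
  rw [forever (n+1) (by omega), forever n hk]

/-- path construction towards a reachable agent -/
lemma build {b : Fin n → ℕ} {E' μ : Finset (Edge n m)} {j : Fin m}
    (hμ : IsBMatching b E' μ) (hj : j ∉ mt μ) :
    ∀ (k : ℕ) (a : Fin n), a ∈ reachN E' μ j k →
    ∃ p : List (Edge n m), p ≠ [] ∧ (∀ e ∈ p.head?, e.2 = j) ∧
      (∀ e ∈ p, e ∈ E' ∧ e ∉ μ) ∧
      (∀ l, (h : l + 1 < p.length) →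
        ((p.get ⟨l, Nat.lt_of_succ_lt h⟩).1, (p.get ⟨l + 1, h⟩).2) ∈ μ) ∧
      (p.map Prod.fst).Nodup ∧ (p.map Prod.snd).Nodup ∧
      (∀ e ∈ p.getLast?, e.1 = a) ∧
      (∀ x ∈ p.dropLast.map Prod.fst, ∃ k' < k, x ∈ reachN E' μ j k') ∧
      (∀ x ∈ p.map Prod.fst, x ∈ reachN E' μ j k) := by
  intro k
  induction k with
  | zero =>
    intro a ha
    obtain ⟨e, he, rfl⟩ := Finset.mem_image.1 ha
    obtain ⟨heE, hej⟩ := Finset.mem_filter.1 he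
    refine ⟨[e], by simp, by simp [hej], ?_, by simp, by simp, by simp, by simp, by simp, ?_⟩
    · intro g hg
      simp only [List.mem_singleton] at hg
      subst hg
      exact ⟨heE, fun hc => (unmatched_not_mem hj hc) hej⟩
    · intro x hx
      simp only [List.map_cons, List.map_nil, List.mem_singleton] at hx
      subst hx
      exact Finset.mem_image.2 ⟨e, he, rfl⟩
  | succ k ih =>
    intro a ha
    by_cases hak : a ∈ reachN E' μ j k
    · obtain ⟨p, h1, h2, h3, h4, h5, h6, h7, h8, h9⟩ := ih a hak
      exact ⟨p, h1, h2, h3, h4, h5, h6, h7,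
        fun x hx => (h8 x hx).imp (fun k' ⟨hk', hm⟩ => ⟨Nat.lt_succ_of_lt hk', hm⟩),
        fun x hx => reach_mono E' μ j k (h9 x hx)⟩
    · have ha' : a ∈ (E'.filter (fun e =>
          e.2 ∈ mt (μ.filter (fun f => f.1 ∈ reachN E' μ j k)))).image Prod.fst := by
        rcases Finset.mem_union.1 ha with h | h
        · exact absurd h hak
        · exact h
      obtain ⟨g, hg, rfl⟩ := Finset.mem_image.1 ha'
      obtain ⟨hgE, hgt⟩ := Finset.mem_filter.1 hg
      obtain ⟨f, hf, hft⟩ := mem_mt.1 hgt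
      obtain ⟨hfμ, hfR⟩ := Finset.mem_filter.1 hf
      obtain ⟨p, h1, h2, h3, h4, h5, h6, h7, h8, h9⟩ := ih f.1 hfR
      have hgμ : g ∉ μ := by
        intro hc
        have := task_inj hμ hc hfμ hft.symm
        rw [this] at hak
        exact hak hfR
      have hlen : 0 < p.length := List.length_pos_iff.2 h1
      have hlast : p.getLast? = some (p.get ⟨p.length - 1, by omega⟩) := by
        rw [List.getLast?_eq_getLast h1, List.getLast_eq_getElem]; rfl
      have hlastagent : (p.get ⟨p.length - 1, by omega⟩).1 = f.1 := by
        apply h7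
        rw [hlast]
        simp
      -- g.2 not among the tasks of p
      have hgnot : g.2 ∉ p.map Prod.snd := by
        intro hc
        obtain ⟨l, hl⟩ := List.mem_iff_get.1 hc
        have hl2 : (p.get ⟨l.1, by
            have := l.2; simpa using this⟩).2 = g.2 := by
          rw [← hl]; simp
        rcases Nat.eq_zero_or_pos l.1 with h0 | h0
        · -- head task is j, but g.2 is matched
          have hhead : p.head? = some (p.get ⟨0, hlen⟩) := by
            obtain ⟨hd, tl, rfl⟩ := List.exists_cons_of_ne_nil h1
            rfl
          have hthis := h2 (p.get ⟨0, hlen⟩) (by rw [hhead]; simp)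
          have hl2' : (p.get ⟨0, hlen⟩).2 = g.2 := by
            have hidx : (⟨l.1, by have := l.2; simpa using this⟩ : Fin p.length)
                = ⟨0, hlen⟩ := by
              ext
              exact h0
            rw [← hidx]
            exact hl2
          have hgj : g.2 = j := by
            rw [← hl2']
            exact hthis
          exact (unmatched_not_mem hj hfμ) (hft.trans hgj)
        · -- interior task: matched to previous agent, contradicting nodup
          have hlt : l.1 - 1 + 1 < p.length := by
            have := l.2; simp only [List.length_map] at this; omega
          have hm := h4 (l.1 - 1) hlt
          have : (⟨l.1 - 1 + 1, hlt⟩ : Fin p.length) = ⟨l.1, by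
              have := l.2; simpa using this⟩ := by
            ext; simp; omega
          rw [this, hl2] at hm
          -- hm : ((p.get ⟨l.1-1,_⟩).1, g.2) ∈ μ ; f = (f.1, g.2) ∈ μ
          have heq : ((p.get ⟨l.1 - 1, Nat.lt_of_succ_lt hlt⟩).1, g.2) = f :=
            task_inj hμ hm hfμ (by rw [hft])
          have hagent : (p.get ⟨l.1 - 1, Nat.lt_of_succ_lt hlt⟩).1 = f.1 := by
            rw [← heq]
          -- positions l.1-1 and p.length-1 differ
          have hne : l.1 - 1 ≠ p.length - 1 := by
            have := l.2; simp only [List.length_map] at this; omega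
          apply hne
          have hinj := h5.get_inj_iff (i := ⟨l.1 - 1, by
              simp only [List.length_map]; omega⟩)
            (j := ⟨p.length - 1, by simp only [List.length_map]; omega⟩)
          have : (p.map Prod.fst).get ⟨l.1 - 1, by simp only [List.length_map]; omega⟩
              = (p.map Prod.fst).get ⟨p.length - 1, by simp only [List.length_map]; omega⟩ := by
            simp only [List.get_eq_getElem, List.getElem_map]
            exact hagent.trans hlastagent.symm
          have := hinj.1 this
          exact congrArg Fin.val this
      refine ⟨p ++ [g], by simp, ?_, ?_, ?_, ?_, ?_, ?_, ?_, ?_⟩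
      · intro e he
        apply h2
        obtain ⟨hd, tl, rfl⟩ := List.exists_cons_of_ne_nil h1
        simpa using he
      · intro e he
        rcases List.mem_append.1 he with h | h
        · exact h3 e h
        · simp only [List.mem_singleton] at h
          subst h
          exact ⟨hgE, hgμ⟩
      · intro l hl
        simp only [List.length_append, List.length_singleton] at hl
        rcases Nat.lt_or_ge (l+1) p.length with h' | h'
        · have e1 : (p ++ [g]).get ⟨l, by simp; omega⟩ = p.get ⟨l, Nat.lt_of_succ_lt h'⟩ :=
            List.getElem_append_left (Nat.lt_of_succ_lt h')
          have e2 : (p ++ [g]).get ⟨l+1, by simp; omega⟩ = p.get ⟨l+1, h'⟩ :=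
            List.getElem_append_left h'
          rw [e1, e2]
          exact h4 l h'
        · have hleq : l + 1 = p.length := by omega
          have e1 : (p ++ [g]).get ⟨l, by simp; omega⟩ = p.get ⟨l, by omega⟩ :=
            List.getElem_append_left (by omega)
          have e2 : (p ++ [g]).get ⟨l+1, by simp; omega⟩ = g := by
            have : (p ++ [g]).get ⟨l+1, by simp; omega⟩ = (p ++ [g]).get ⟨p.length, by simp⟩ := by
              congr 1
              ext; simp; omega
            rw [this]
            simp
          rw [e1, e2]
          have e3 : (p.get ⟨l, by omega⟩).1 = f.1 := by
            have : (⟨l, by omega⟩ : Fin p.length) = ⟨p.length - 1, by omega⟩ := by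
              ext; simp; omega
            rw [this]
            exact hlastagent
          rw [e3, ← hft]
          exact hfμ
      · rw [List.map_append, List.nodup_append]
        refine ⟨h5, by simp, ?_⟩
        intro x hx _ hx2 hxy; subst hxy
        simp only [List.map_cons, List.map_nil, List.mem_singleton] at hx2
        subst hx2
        exact hak (h9 _ hx)
      · rw [List.map_append, List.nodup_append]
        refine ⟨h6, by simp, ?_⟩
        · intro x hx _ hx2 hxy; subst hxy
          simp only [List.map_cons, List.map_nil, List.mem_singleton] at hx2
          subst hx2
          exact hgnot hx
      · intro e he
        rw [List.getLast?_concat] at he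
        simp only [Option.mem_some_iff] at he
        subst he
        rfl
      · intro x hx
        rw [List.dropLast_concat] at hx
        exact ⟨k, Nat.lt_succ_self k, h9 x hx⟩
      · intro x hx
        rw [List.map_append] at hx
        rcases List.mem_append.1 hx with h | h
        · exact reach_mono E' μ j k (h9 x h)
        · simp only [List.map_cons, List.map_nil, List.mem_singleton] at h
          subst h
          exact ha

end PoA
namespace PoA
open Finset

variable {n m : ℕ}

/-- If some reachable agent is unsaturated, an augmenting path exists. -/
lemma augpath_of_unsat {b : Fin n → ℕ} {E' μ : Finset (Edge n m)} {j : Fin m}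
    (hμ : IsBMatching b E' μ) (hj : j ∉ mt μ) {N : ℕ}
    (h : ∃ a ∈ reachN E' μ j N, deg μ a < b a) :
    ∃ p, IsAugPathFrom b E' μ j p := by
  classical
  have hP : ∃ k, ∃ a ∈ reachN E' μ j k, deg μ a < b a := ⟨N, h⟩
  set k₀ := Nat.find hP with hk₀
  obtain ⟨a, ha, hunsat⟩ := Nat.find_spec hP
  obtain ⟨p, h1, h2, h3, h4, h5, h6, h7, h8, h9⟩ := build hμ hj k₀ a ha
  refine ⟨p, ⟨h1, h2, h3, h4, ?_, ?_, h5, h6⟩⟩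
  · -- satInterior
    intro l hl
    have hmem : (p.get ⟨l, Nat.lt_of_succ_lt hl⟩).1 ∈ p.dropLast.map Prod.fst := by
      have hld : l < p.dropLast.length := by
        rw [List.length_dropLast]
        omega
      have : p.dropLast[l] = p[l] := List.getElem_dropLast hld
      have hmm : p.dropLast[l] ∈ p.dropLast := List.getElem_mem hld
      rw [this] at hmm
      exact List.mem_map_of_mem (f := Prod.fst) hmm
    obtain ⟨k', hk', hreach⟩ := h8 _ hmem
    by_contra hcon
    push_neg at hcon
    exact Nat.find_min hP hk' ⟨_, hreach, hcon⟩
  · -- unsatLast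
    intro e he
    rw [h7 e he]
    exact hunsat

/-- Blocking certificate when no augmenting path exists. -/
lemma blocking {b : Fin n → ℕ} {E' μ : Finset (Edge n m)} {j : Fin m}
    (hμ : IsBMatching b E' μ) (hj : j ∉ mt μ)
    (hno : ¬ ∃ p, IsAugPathFrom b E' μ j p) :
    ∃ RA : Finset (Fin n), (∀ a ∈ RA, b a ≤ deg μ a) ∧
      (∀ e ∈ E', (e.2 = j ∨ e.2 ∈ mt (μ.filter (fun f => f.1 ∈ RA))) → e.1 ∈ RA) := by
  refine ⟨reachN E' μ j n, ?_, ?_⟩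
  · intro a ha
    by_contra hcon
    push_neg at hcon
    exact hno (augpath_of_unsat hμ hj ⟨a, ha, hcon⟩)
  · intro e heE hor
    rcases hor with h | h
    · have : e.1 ∈ reachN E' μ j 0 :=
        Finset.mem_image.2 ⟨e, Finset.mem_filter.2 ⟨heE, h⟩, rfl⟩
      exact reach_le E' μ j (Nat.zero_le n) this
    · have : e.1 ∈ reachN E' μ j (n+1) := by
        apply Finset.mem_union_right
        exact Finset.mem_image.2 ⟨e, Finset.mem_filter.2 ⟨heE, h⟩, rfl⟩
      rwa [reach_stab E' μ j] at this

/-- Core 1: if the matched set plus j is coverable, an augmenting path exists. -/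
lemma core1 {b : Fin n → ℕ} {E' μ : Finset (Edge n m)} {j : Fin m}
    (hμ : IsBMatching b E' μ) (hj : j ∉ mt μ)
    {ν : Finset (Edge n m)} (hν : IsBMatching b E' ν)
    (hsub : insert j (mt μ) ⊆ mt ν) :
    ∃ p, IsAugPathFrom b E' μ j p := by
  by_contra hno
  obtain ⟨RA, hsat, hcl⟩ := blocking hμ hj hno
  set RT : Finset (Fin m) := insert j (mt (μ.filter (fun f => f.1 ∈ RA))) with hRT
  have hjRT : j ∉ mt (μ.filter (fun f => f.1 ∈ RA)) := by
    intro hc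
    obtain ⟨e, he, het⟩ := mem_mt.1 hc
    exact hj (mem_mt.2 ⟨e, (Finset.mem_filter.1 he).1, het⟩)
  have hcard : RT.card = 1 + ∑ a ∈ RA, b a := by
    rw [hRT, Finset.card_insert_of_notMem hjRT, card_mt_filter_sat hμ hsat]
    omega
  have hRTν : RT ⊆ mt ν := by
    intro t ht
    rcases Finset.mem_insert.1 ht with rfl | ht
    · exact hsub (Finset.mem_insert_self _ _)
    · obtain ⟨e, he, het⟩ := mem_mt.1 ht
      exact hsub (Finset.mem_insert_of_mem (mem_mt.2 ⟨e, (Finset.mem_filter.1 he).1, het⟩))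
  have hinto : ∀ e ∈ ν, e.2 ∈ RT → e.1 ∈ RA := by
    intro e he het
    exact hcl e (hν.1 he) (Finset.mem_insert.1 het)
  have := card_into hν hRTν hinto
  omega

/-- Core 3: exchange property of coverable sets. -/
lemma core3 {b : Fin n → ℕ} {E' : Finset (Edge n m)} {C Y : Finset (Fin m)}
    (hC : Cov b E' C) (hY : Cov b E' Y) (hlt : Y.card < C.card) :
    ∃ u ∈ C \ Y, Cov b E' (insert u Y) := by
  classical
  by_contra hno
  push_neg at hno
  obtain ⟨μY, hμY, hmtY⟩ := hY
  obtain ⟨νC, hνC, hmtC⟩ := hC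
  -- for each u in C \ Y there is a blocking certificate
  have hblock : ∀ u ∈ C \ Y, ∃ RA : Finset (Fin n), (∀ a ∈ RA, b a ≤ deg μY a) ∧
      (∀ e ∈ E', (e.2 = u ∨ e.2 ∈ mt (μY.filter (fun f => f.1 ∈ RA))) → e.1 ∈ RA) := by
    intro u hu
    have huY : u ∉ mt μY := by rw [hmtY]; exact (Finset.mem_sdiff.1 hu).2
    apply blocking hμY huY
    intro ⟨p, hp⟩
    apply hno u hu
    obtain ⟨hbm, hmt⟩ := core2 p μY u hμY huY hp
    exact ⟨applyPath μY p, hbm, by rw [hmt, hmtY]⟩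
  -- union of the blocking agent sets
  set RAU : Finset (Fin n) :=
    (C \ Y).attach.biUnion (fun u => (hblock u.1 u.2).choose) with hRAU
  have hsatU : ∀ a ∈ RAU, b a ≤ deg μY a := by
    intro a ha
    obtain ⟨u, _, hu⟩ := Finset.mem_biUnion.1 ha
    exact (hblock u.1 u.2).choose_spec.1 a hu
  set M : Finset (Fin m) := mt (μY.filter (fun f => f.1 ∈ RAU)) with hM
  have hMY : M ⊆ Y := by
    intro t ht
    obtain ⟨e, he, het⟩ := mem_mt.1 ht
    rw [← hmtY]
    exact mem_mt.2 ⟨e, (Finset.mem_filter.1 he).1, het⟩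
  have hMcard : M.card = ∑ a ∈ RAU, b a := card_mt_filter_sat hμY hsatU
  -- every νC-edge at a task of (C \ Y) ∪ (C ∩ M) enters RAU
  have hinto : ∀ e ∈ νC, e.2 ∈ (C \ Y) ∪ (C ∩ M) → e.1 ∈ RAU := by
    intro e he het
    rcases Finset.mem_union.1 het with h | h
    · have hspec := (hblock e.2 h).choose_spec
      have : e.1 ∈ (hblock e.2 h).choose := hspec.2 e (hνC.1 he) (Or.inl rfl)
      exact Finset.mem_biUnion.2 ⟨⟨e.2, h⟩, Finset.mem_attach _ _, this⟩
    · -- e.2 ∈ M : matched in μY to an agent of RAU, i.e. of some RA_u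
      obtain ⟨f, hf, hft⟩ := mem_mt.1 (Finset.mem_inter.1 h).2
      obtain ⟨hfμ, hfRA⟩ := Finset.mem_filter.1 hf
      obtain ⟨u, humem, hu⟩ := Finset.mem_biUnion.1 hfRA
      have hspec := (hblock u.1 u.2).choose_spec
      have he1 : e.1 ∈ (hblock u.1 u.2).choose := by
        apply hspec.2 e (hνC.1 he)
        right
        exact mem_mt.2 ⟨f, Finset.mem_filter.2 ⟨hfμ, hu⟩, hft⟩
      exact Finset.mem_biUnion.2 ⟨u, humem, he1⟩
  have hXsub : (C \ Y) ∪ (C ∩ M) ⊆ mt νC := by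
    intro t ht
    rw [hmtC]
    rcases Finset.mem_union.1 ht with h | h
    · exact (Finset.mem_sdiff.1 h).1
    · exact (Finset.mem_inter.1 h).1
  have hXcard := card_into hνC hXsub hinto
  have hdisj : Disjoint (C \ Y) (C ∩ M) := by
    rw [Finset.disjoint_left]
    intro t ht hc
    exact (Finset.mem_sdiff.1 ht).2 (hMY (Finset.mem_inter.1 hc).2)
  rw [Finset.card_union_of_disjoint hdisj] at hXcard
  -- |C \ Y| + |C ∩ M| ≤ |M| = |M ∩ C| + |M \ C| so |C \ Y| ≤ |M \ C| ≤ |Y \ C|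
  have hMsplit : M.card = (C ∩ M).card + (M \ C).card := by
    rw [Finset.inter_comm, ← Finset.card_inter_add_card_sdiff M C]
  have hMC : (M \ C).card ≤ (Y \ C).card :=
    Finset.card_le_card (fun t ht => Finset.mem_sdiff.2
      ⟨hMY (Finset.mem_sdiff.1 ht).1, (Finset.mem_sdiff.1 ht).2⟩)
  have hCsplit : C.card = (C ∩ Y).card + (C \ Y).card :=
    (Finset.card_inter_add_card_sdiff C Y).symm
  have hYsplit : Y.card = (Y ∩ C).card + (Y \ C).card :=
    (Finset.card_inter_add_card_sdiff Y C).symm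
  have hinterYC : (C ∩ Y).card = (Y ∩ C).card := by rw [Finset.inter_comm]
  omega

end PoA
namespace PoA
open Finset

variable {n m : ℕ}

lemma sortedTasks_perm (q : Fin m → ℝ) : (sortedTasks m q).Perm (List.finRange m) :=
  List.perm_insertionSort _ _

lemma sortedTasks_nodup (q : Fin m → ℝ) : (sortedTasks m q).Nodup :=
  ((sortedTasks_perm q).nodup_iff).2 (List.nodup_finRange m)

lemma sortedTasks_toFinset (q : Fin m → ℝ) : (sortedTasks m q).toFinset = Finset.univ := by
  ext t
  simp [List.mem_toFinset, (sortedTasks_perm q).mem_iff, List.mem_finRange]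

lemma sortedTasks_sorted (q : Fin m → ℝ) :
    List.Pairwise (fun j k : Fin m => q k ≤ q j) (sortedTasks m q) := by
  haveI : Std.Total (fun j k : Fin m => q k ≤ q j) :=
    ⟨fun a b => le_total (q b) (q a)⟩
  haveI : IsTrans (Fin m) (fun j k : Fin m => q k ≤ q j) :=
    ⟨fun _ _ _ hab hbc => le_trans hbc hab⟩
  exact List.pairwise_insertionSort _ _

lemma selectPath_some {cost : List (Edge n m) → ℕ} {b : Fin n → ℕ}
    {E' μ : Finset (Edge n m)} {j : Fin m} {p : List (Edge n m)}
    (h : selectPath cost b E' μ j = some p) : IsAugPathFrom b E' μ j p := by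
  unfold selectPath at h
  split at h
  · next hex =>
    rw [Option.some.injEq] at h
    rw [← h]
    exact hex.choose_spec.1
  · exact absurd h (by simp)

lemma selectPath_isSome {cost : List (Edge n m) → ℕ} {b : Fin n → ℕ}
    {E' μ : Finset (Edge n m)} {j : Fin m}
    (h : ∃ p, IsAugPathFrom b E' μ j p) :
    ∃ p, selectPath cost b E' μ j = some p := by
  classical
  obtain ⟨p₀, hp₀⟩ := h
  have hex : ∃ c : ℕ, ∃ p, IsAugPathFrom b E' μ j p ∧ cost p = c := ⟨cost p₀, p₀, hp₀, rfl⟩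
  obtain ⟨p₁, hp₁, hc₁⟩ := Nat.find_spec hex
  have hcond : ∃ p, IsAugPathFrom b E' μ j p ∧
      ∀ p', IsAugPathFrom b E' μ j p' → cost p ≤ cost p' := by
    refine ⟨p₁, hp₁, fun p' hp' => ?_⟩
    rw [hc₁]
    by_contra hlt
    push_neg at hlt
    exact Nat.find_min hex hlt ⟨p', hp', rfl⟩
  unfold selectPath
  rw [dif_pos hcond]
  exact ⟨hcond.choose, rfl⟩

lemma selectPath_none {cost : List (Edge n m) → ℕ} {b : Fin n → ℕ}
    {E' μ : Finset (Edge n m)} {j : Fin m}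
    (h : ¬ ∃ p, IsAugPathFrom b E' μ j p) : selectPath cost b E' μ j = none := by
  unfold selectPath
  rw [dif_neg]
  rintro ⟨p, hp, _⟩
  exact h ⟨p, hp⟩

noncomputable def stepFn (cost : List (Edge n m) → ℕ) (b : Fin n → ℕ)
    (E' : Finset (Edge n m)) : Finset (Edge n m) → Fin m → Finset (Edge n m) :=
  fun μ j =>
    match selectPath cost b E' μ j with
    | some p => applyPath μ p
    | none => μ

lemma runAug_eq_foldl (cost : List (Edge n m) → ℕ) (b : Fin n → ℕ) (q : Fin m → ℝ)
    (E' : Finset (Edge n m)) :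
    runAug cost b q E' = (sortedTasks m q).foldl (stepFn cost b E') ∅ := rfl

/-- behaviour of one step -/
lemma step_inv {cost : List (Edge n m) → ℕ} {b : Fin n → ℕ} {E' μ : Finset (Edge n m)}
    {P : Finset (Fin m)} {j : Fin m}
    (hμ : IsBMatching b E' μ) (hmtP : mt μ ⊆ P)
    (hmax : ∀ C, Cov b E' C → C ⊆ P → C.card ≤ (mt μ).card) (hjP : j ∉ P) :
    IsBMatching b E' (stepFn cost b E' μ j) ∧
    (mt (stepFn cost b E' μ j) = mt μ ∨ mt (stepFn cost b E' μ j) = insert j (mt μ)) ∧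
    (∀ C, Cov b E' C → C ⊆ insert j P → C.card ≤ (mt (stepFn cost b E' μ j)).card) := by
  have hjμ : j ∉ mt μ := fun h => hjP (hmtP h)
  rcases hsel : selectPath cost b E' μ j with _ | p
  · -- no augmenting path was selected
    have hnone : ¬ ∃ p, IsAugPathFrom b E' μ j p := by
      intro h
      obtain ⟨p, hp⟩ := selectPath_isSome (cost := cost) h
      rw [hsel] at hp
      cases hp
    have hstep : stepFn cost b E' μ j = μ := by
      unfold stepFn
      rw [hsel]
    rw [hstep]
    refine ⟨hμ, Or.inl rfl, ?_⟩
    -- no coverable set in insert j P can be bigger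
    intro C hC hCP
    by_contra hbig
    push_neg at hbig
    obtain ⟨u, hu, hucov⟩ := core3 hC ⟨μ, hμ, rfl⟩ hbig
    by_cases huj : u = j
    · subst huj
      obtain ⟨ν, hν, hmtν⟩ := hucov
      exact hnone (core1 hμ hjμ hν (by rw [hmtν]))
    · have huP : u ∈ P := by
        have := hCP (Finset.mem_sdiff.1 hu).1
        rcases Finset.mem_insert.1 this with h | h
        · exact absurd h huj
        · exact h
      have : (insert u (mt μ)).card ≤ (mt μ).card :=
        hmax _ hucov (Finset.insert_subset huP hmtP)
      rw [Finset.card_insert_of_notMem (by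
        intro hc
        exact (Finset.mem_sdiff.1 hu).2 hc)] at this
      omega
  · -- an augmenting path was applied
    have hp : IsAugPathFrom b E' μ j p := selectPath_some hsel
    have hstep : stepFn cost b E' μ j = applyPath μ p := by
      unfold stepFn
      rw [hsel]
    obtain ⟨hbm, hmt⟩ := core2 p μ j hμ hjμ hp
    rw [hstep, hmt]
    refine ⟨hbm, Or.inr rfl, ?_⟩
    intro C hC hCP
    have h1 : C.erase j ⊆ P := by
      intro t ht
      obtain ⟨htj, htC⟩ := Finset.mem_erase.1 ht
      rcases Finset.mem_insert.1 (hCP htC) with h | h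
      · exact absurd h htj
      · exact h
    have h2 : (C.erase j).card ≤ (mt μ).card :=
      hmax _ (cov_subset hC (Finset.erase_subset _ _)) h1
    have h3 : C.card ≤ (C.erase j).card + 1 := by
      by_cases hjC : j ∈ C
      · rw [Finset.card_erase_of_mem hjC]
        omega
      · rw [Finset.erase_eq_of_notMem hjC]
        omega
    rw [Finset.card_insert_of_notMem hjμ]
    omega

/-- characterization of the matched set after one step -/
lemma step_mt {cost : List (Edge n m) → ℕ} {b : Fin n → ℕ} {E' μ : Finset (Edge n m)}
    {j : Fin m} (hμ : IsBMatching b E' μ) (hjμ : j ∉ mt μ) :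
    mt (stepFn cost b E' μ j) =
      if Cov b E' (insert j (mt μ)) then insert j (mt μ) else mt μ := by
  by_cases hcov : Cov b E' (insert j (mt μ))
  · rw [if_pos hcov]
    obtain ⟨ν, hν, hmtν⟩ := hcov
    obtain ⟨p, hp⟩ := selectPath_isSome (cost := cost) (core1 hμ hjμ hν (by rw [hmtν]))
    unfold stepFn
    rw [hp]
    exact (core2 p μ j hμ hjμ (selectPath_some hp)).2
  · rw [if_neg hcov]
    have hnone : ¬ ∃ p, IsAugPathFrom b E' μ j p := by
      rintro ⟨p, hp⟩
      obtain ⟨hbm, hmt⟩ := core2 p μ j hμ hjμ hp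
      exact hcov ⟨applyPath μ p, hbm, hmt⟩
    unfold stepFn
    rw [selectPath_none hnone]

/-- master induction along the processing list -/
lemma run_master (cost : List (Edge n m) → ℕ) (b : Fin n → ℕ) (E' : Finset (Edge n m)) :
    ∀ (L : List (Fin m)) (μ₀ : Finset (Edge n m)) (P₀ : Finset (Fin m)),
    L.Nodup → (∀ j ∈ L, j ∉ P₀) → IsBMatching b E' μ₀ → mt μ₀ ⊆ P₀ →
    (∀ C, Cov b E' C → C ⊆ P₀ → C.card ≤ (mt μ₀).card) →
    IsBMatching b E' (L.foldl (stepFn cost b E') μ₀) ∧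
    mt (L.foldl (stepFn cost b E') μ₀) ⊆ P₀ ∪ L.toFinset ∧
    mt (L.foldl (stepFn cost b E') μ₀) ∩ P₀ = mt μ₀ ∧
    (∀ C, Cov b E' C → C ⊆ P₀ ∪ L.toFinset →
      C.card ≤ (mt (L.foldl (stepFn cost b E') μ₀)).card) := by
  intro L
  induction L with
  | nil =>
    intro μ₀ P₀ _ _ h1 h2 h3
    refine ⟨h1, ?_, ?_, ?_⟩
    · simpa using h2
    · exact Finset.inter_eq_left.2 h2
    · simpa using h3
  | cons j L' ih =>
    intro μ₀ P₀ hnd hnotin h1 h2 h3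
    have hjP : j ∉ P₀ := hnotin j List.mem_cons_self
    obtain ⟨s1, s2, s3⟩ := step_inv (cost := cost) h1 h2 h3 hjP
    set μ₁ := stepFn cost b E' μ₀ j with hμ₁
    have hmt₁sub : mt μ₁ ⊆ insert j P₀ := by
      rcases s2 with h | h
      · rw [h]; exact h2.trans (Finset.subset_insert _ _)
      · rw [h]; exact Finset.insert_subset_insert _ h2
    have hnotin' : ∀ j' ∈ L', j' ∉ insert j P₀ := by
      intro j' hj'
      rw [Finset.mem_insert]
      push_neg
      constructor
      · intro hc
        rw [hc] at hj'
        exact (List.nodup_cons.1 hnd).1 hj'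
      · exact hnotin j' (List.mem_cons_of_mem _ hj')
    obtain ⟨r1, r2, r3, r4⟩ := ih μ₁ (insert j P₀) (List.nodup_cons.1 hnd).2 hnotin'
      s1 hmt₁sub s3
    have hLfold : (j :: L').foldl (stepFn cost b E') μ₀
        = L'.foldl (stepFn cost b E') μ₁ := rfl
    have hset : insert j P₀ ∪ L'.toFinset = P₀ ∪ (j :: L').toFinset := by
      ext x
      simp only [Finset.mem_union, Finset.mem_insert, List.toFinset_cons]
      tauto
    rw [hLfold]
    refine ⟨r1, by rw [← hset]; exact r2, ?_, by rw [← hset]; exact r4⟩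
    -- slicing
    have hsl : mt (L'.foldl (stepFn cost b E') μ₁) ∩ P₀ = mt μ₁ ∩ P₀ := by
      have hPsub : P₀ ⊆ insert j P₀ := Finset.subset_insert _ _
      have : mt (L'.foldl (stepFn cost b E') μ₁) ∩ P₀
          = (mt (L'.foldl (stepFn cost b E') μ₁) ∩ insert j P₀) ∩ P₀ := by
        rw [Finset.inter_assoc, Finset.inter_eq_right.2 hPsub]
      rw [this, r3]
    rw [hsl]
    rcases s2 with h | h
    · rw [h]
      exact Finset.inter_eq_left.2 h2
    · rw [h]
      rw [Finset.insert_inter_of_notMem hjP]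
      exact Finset.inter_eq_left.2 h2

end PoA
namespace PoA
open Finset

variable {n m : ℕ}

lemma inter_insert_card {C T : Finset (Fin m)} {a : Fin m} (haT : a ∉ T) :
    (C ∩ insert a T).card = (C.erase a ∩ T).card + (if a ∈ C then 1 else 0) := by
  have h1 : C.erase a ∩ T = C ∩ T := by
    ext x
    simp only [Finset.mem_inter, Finset.mem_erase]
    constructor
    · rintro ⟨⟨_, h⟩, ht⟩; exact ⟨h, ht⟩
    · rintro ⟨hx, ht⟩
      exact ⟨⟨fun hc => haT (hc ▸ ht), hx⟩, ht⟩
  rw [h1]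
  by_cases haC : a ∈ C
  · rw [if_pos haC]
    have h2 : C ∩ insert a T = insert a (C ∩ T) := by
      ext x
      simp only [Finset.mem_inter, Finset.mem_insert]
      constructor
      · rintro ⟨hx, (rfl | ht)⟩
        · exact Or.inl rfl
        · exact Or.inr ⟨hx, ht⟩
      · rintro (rfl | ⟨hx, ht⟩)
        · exact ⟨haC, Or.inl rfl⟩
        · exact ⟨hx, Or.inr ht⟩
    rw [h2, Finset.card_insert_of_notMem (fun hc => haT (Finset.mem_inter.1 hc).2)]
  · rw [if_neg haC]
    have h2 : C ∩ insert a T = C ∩ T := by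
      ext x
      simp only [Finset.mem_inter, Finset.mem_insert]
      constructor
      · rintro ⟨hx, (rfl | ht)⟩
        · exact absurd hx haC
        · exact ⟨hx, ht⟩
      · rintro ⟨hx, ht⟩; exact ⟨hx, Or.inr ht⟩
    rw [h2]
    omega

lemma abel (q : Fin m → ℝ) :
    ∀ (L : List (Fin m)), L.Nodup → List.Pairwise (fun j k : Fin m => q k ≤ q j) L →
    ∀ (W : ℝ), (∀ t ∈ L, 0 ≤ q t) → (∀ t ∈ L, q t ≤ W) → 0 ≤ W →
    ∀ (k : ℕ) (C R : Finset (Fin m)), C ⊆ L.toFinset → R ⊆ L.toFinset →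
    (∀ s : ℕ, (C ∩ (L.take s).toFinset).card ≤ (R ∩ (L.take s).toFinset).card + k) →
    ∑ t ∈ C, q t ≤ ∑ t ∈ R, q t + (k : ℝ) * W := by
  intro L
  induction L with
  | nil =>
    intro _ _ W _ _ hW0 k C R hC hR _
    simp only [List.toFinset_nil, Finset.subset_empty] at hC hR
    rw [hC, hR]
    simp only [Finset.sum_empty]
    positivity
  | cons a L' ih =>
    intro hnd hsort W h0 hW hW0 k C R hC hR hdom
    have haL' : a ∉ L' := (List.nodup_cons.1 hnd).1
    have hnd' : L'.Nodup := (List.nodup_cons.1 hnd).2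
    have hsort' : List.Pairwise (fun j k : Fin m => q k ≤ q j) L' := hsort.of_cons
    have hhead : ∀ t ∈ L', q t ≤ q a := (List.pairwise_cons.1 hsort).1
    have h0' : ∀ t ∈ L', 0 ≤ q t := fun t ht => h0 t (List.mem_cons_of_mem _ ht)
    have hW' : ∀ t ∈ L', q t ≤ W := fun t ht => hW t (List.mem_cons_of_mem _ ht)
    have h0a : 0 ≤ q a := h0 a List.mem_cons_self
    have hWa : q a ≤ W := hW a List.mem_cons_self
    have hCsub : C.erase a ⊆ L'.toFinset := by
      intro x hx
      obtain ⟨hxa, hxC⟩ := Finset.mem_erase.1 hx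
      have := hC hxC
      rw [List.toFinset_cons, Finset.mem_insert] at this
      rcases this with h | h
      · exact absurd h hxa
      · exact h
    have hRsub : R.erase a ⊆ L'.toFinset := by
      intro x hx
      obtain ⟨hxa, hxR⟩ := Finset.mem_erase.1 hx
      have := hR hxR
      rw [List.toFinset_cons, Finset.mem_insert] at this
      rcases this with h | h
      · exact absurd h hxa
      · exact h
    have hdom' : ∀ s : ℕ,
        (C.erase a ∩ (L'.take s).toFinset).card + (if a ∈ C then 1 else 0) ≤
        (R.erase a ∩ (L'.take s).toFinset).card + (if a ∈ R then 1 else 0) + k := by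
      intro s
      have hTs : a ∉ (L'.take s).toFinset := by
        intro hc
        exact haL' (List.take_subset s L' (List.mem_toFinset.1 hc))
      have h := hdom (s+1)
      rw [List.take_succ_cons, List.toFinset_cons, inter_insert_card hTs,
        inter_insert_card hTs] at h
      omega
    have subhelp : ∀ (X : Finset (Fin m)), X ⊆ (a :: L').toFinset → a ∉ X →
        X ⊆ L'.toFinset := by
      intro X hX haX x hx
      have := hX hx
      rw [List.toFinset_cons, Finset.mem_insert] at this
      rcases this with rfl | h
      · exact absurd hx haX
      · exact h
    by_cases haC : a ∈ C <;> by_cases haR : a ∈ R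
    · -- both contain a
      have hih := ih hnd' hsort' W h0' hW' hW0 k (C.erase a) (R.erase a) hCsub hRsub
        (by intro s; have := hdom' s; rw [if_pos haC, if_pos haR] at this; omega)
      have hsc := Finset.sum_erase_add C q haC
      have hsr := Finset.sum_erase_add R q haR
      linarith
    · -- a ∈ C, a ∉ R
      have hk1 : 1 ≤ k := by
        have := hdom' 0
        rw [if_pos haC, if_neg haR] at this
        simpa using this
      have hRsub' : R ⊆ L'.toFinset := subhelp R hR haR
      have hih := ih hnd' hsort' W h0' hW' hW0 (k-1) (C.erase a) R hCsub hRsub'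
        (by
          intro s
          have h := hdom' s
          rw [if_pos haC, if_neg haR] at h
          rw [Finset.erase_eq_of_notMem haR] at h
          omega)
      have hsc := Finset.sum_erase_add C q haC
      have hcast : ((k-1 : ℕ) : ℝ) = (k:ℝ) - 1 := by
        have := Nat.cast_sub (R := ℝ) hk1
        simpa using this
      rw [hcast] at hih
      linarith
    · -- a ∉ C, a ∈ R
      have hCsub' : C ⊆ L'.toFinset := subhelp C hC haC
      have hih := ih hnd' hsort' (q a) h0' hhead h0a (k+1) C (R.erase a) hCsub' hRsub
        (by
          intro s
          have h := hdom' s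
          rw [if_neg haC, if_pos haR] at h
          rw [Finset.erase_eq_of_notMem haC] at h
          omega)
      have hsr := Finset.sum_erase_add R q haR
      have hexp : ((k+1:ℕ):ℝ) * q a = (k:ℝ) * q a + q a := by push_cast; ring
      rw [hexp] at hih
      have hk0 : (0:ℝ) ≤ (k:ℝ) := Nat.cast_nonneg k
      have hmul : (k:ℝ) * q a ≤ (k:ℝ) * W := mul_le_mul_of_nonneg_left hWa hk0
      linarith
    · -- neither
      have hCsub' : C ⊆ L'.toFinset := subhelp C hC haC
      have hRsub' : R ⊆ L'.toFinset := subhelp R hR haR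
      exact ih hnd' hsort' W h0' hW' hW0 k C R hCsub' hRsub'
        (by
          intro s
          have h := hdom' s
          rw [if_neg haC, if_neg haR] at h
          rw [Finset.erase_eq_of_notMem haC, Finset.erase_eq_of_notMem haR] at h
          omega)

lemma bmatching_empty (b : Fin n → ℕ) (E' : Finset (Edge n m)) :
    IsBMatching b E' (∅ : Finset (Edge n m)) := by
  refine ⟨Finset.empty_subset _, fun i => ?_, fun t => ?_⟩
  · simp [deg]
  · simp

@[simp] lemma mt_empty : mt (∅ : Finset (Edge n m)) = ∅ := rfl

/-- the mechanism output is a b-matching -/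
theorem runAug_bmatching (cost : List (Edge n m) → ℕ) (b : Fin n → ℕ) (q : Fin m → ℝ)
    (E' : Finset (Edge n m)) : IsBMatching b E' (runAug cost b q E') := by
  rw [runAug_eq_foldl]
  exact (run_master cost b E' (sortedTasks m q) ∅ ∅ (sortedTasks_nodup q) (by simp)
    (bmatching_empty b E') (by simp) (by
      intro C hC hCe
      rw [Finset.subset_empty] at hCe
      simp [hCe])).1

/-- prefix dominance of the output's matched set -/
lemma runAug_prefix_dom (cost : List (Edge n m) → ℕ) (b : Fin n → ℕ) (q : Fin m → ℝ)
    (E' : Finset (Edge n m)) {ν : Finset (Edge n m)} (hν : IsBMatching b E' ν) (s : ℕ) :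
    ((mt ν) ∩ ((sortedTasks m q).take s).toFinset).card ≤
    ((mt (runAug cost b q E')) ∩ ((sortedTasks m q).take s).toFinset).card := by
  classical
  set L := sortedTasks m q with hL
  have hnd : L.Nodup := sortedTasks_nodup q
  set T : Finset (Fin m) := (L.take s).toFinset with hT
  set μs : Finset (Edge n m) := (L.take s).foldl (stepFn cost b E') ∅ with hμs
  have htake : (L.take s).Nodup := hnd.sublist (List.take_sublist s L)
  have hM1 := run_master cost b E' (L.take s) ∅ ∅ htake (by simp)
    (bmatching_empty b E') (by simp) (by
      intro C hC hCe
      rw [Finset.subset_empty] at hCe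
      simp [hCe])
  have hdropnotin : ∀ j ∈ L.drop s, j ∉ T := by
    intro j hj hjT
    have hnd2 := hnd
    rw [← List.take_append_drop s L, List.nodup_append] at hnd2
    exact hnd2.2.2 _ (List.mem_toFinset.1 hjT) _ hj rfl
  have hμssub : mt μs ⊆ T := by
    have := hM1.2.1
    simpa using this
  have hM2 := run_master cost b E' (L.drop s) μs T (hnd.sublist (List.drop_sublist s L))
    hdropnotin hM1.1 hμssub (by
      intro C hC hCT
      have := hM1.2.2.2 C hC (by simpa using hCT)
      exact this)
  have hfold : L.foldl (stepFn cost b E') ∅ = (L.drop s).foldl (stepFn cost b E') μs := by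
    rw [hμs, ← List.foldl_append, List.take_append_drop]
  have hslice : mt (runAug cost b q E') ∩ T = mt μs := by
    rw [runAug_eq_foldl, ← hL, hfold]
    exact hM2.2.2.1
  rw [hslice]
  -- maximality of μs on T
  have hcov : Cov b E' (mt ν ∩ T) := cov_subset ⟨ν, hν, rfl⟩ (Finset.inter_subset_left)
  have := hM1.2.2.2 (mt ν ∩ T) hcov (by rw [Finset.empty_union]; exact (Finset.inter_subset_right :
    mt ν ∩ T ⊆ T))
  exact this

/-- the mechanism output is a maximum-weight b-matching -/
theorem runAug_max (cost : List (Edge n m) → ℕ) (b : Fin n → ℕ) (q : Fin m → ℝ)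
    (hq : ∀ j, 0 < q j) (E' : Finset (Edge n m)) {ν : Finset (Edge n m)}
    (hν : IsBMatching b E' ν) : weight q ν ≤ weight q (runAug cost b q E') := by
  classical
  have hout := runAug_bmatching cost b q E'
  rw [weight_eq_sum_mt q hν, weight_eq_sum_mt q hout]
  have habel := abel q (sortedTasks m q) (sortedTasks_nodup q) (sortedTasks_sorted q)
    (∑ t, q t) (fun t _ => (hq t).le)
    (fun t _ => Finset.single_le_sum (fun t' _ => (hq t').le) (Finset.mem_univ t))
    (Finset.sum_nonneg (fun t _ => (hq t).le)) 0 (mt ν) (mt (runAug cost b q E'))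
    (by rw [sortedTasks_toFinset]; exact Finset.subset_univ _)
    (by rw [sortedTasks_toFinset]; exact Finset.subset_univ _)
    (by
      intro s
      have := runAug_prefix_dom cost b q E' hν s
      omega)
  simpa using habel

theorem runAug_ismax (cost : List (Edge n m) → ℕ) (b : Fin n → ℕ) (q : Fin m → ℝ)
    (hq : ∀ j, 0 < q j) (E' : Finset (Edge n m)) :
    IsMaxMatching b q E' (runAug cost b q E') :=
  ⟨runAug_bmatching cost b q E', fun ν hν => runAug_max cost b q hq E' hν⟩

end PoA
namespace PoA
open Finset

variable {n m : ℕ}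

lemma bmatching_mono_edges {b : Fin n → ℕ} {F F' μ : Finset (Edge n m)}
    (h : IsBMatching b F μ) (hFF : F ⊆ F') : IsBMatching b F' μ :=
  ⟨h.1.trans hFF, h.2.1, h.2.2⟩

lemma cov_mono_edges {b : Fin n → ℕ} {F F' : Finset (Edge n m)} {C : Finset (Fin m)}
    (h : Cov b F C) (hFF : F ⊆ F') : Cov b F' C := by
  obtain ⟨μ, hμ, hmt⟩ := h
  exact ⟨μ, bmatching_mono_edges hμ hFF, hmt⟩

lemma mt_union (μ ν : Finset (Edge n m)) : mt (μ ∪ ν) = mt μ ∪ mt ν :=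
  Finset.image_union _ _

lemma filter_agent_bmatching {b : Fin n → ℕ} {E' μ : Finset (Edge n m)}
    (h : IsBMatching b E' μ) (p : Edge n m → Prop) [DecidablePred p] :
    IsBMatching b E' (μ.filter p) := bmatching_subset h (Finset.filter_subset _ _)

/-- composing an F-matching with a set of edges of agent i -/
lemma compose {b : Fin n → ℕ} {F G ρ S : Finset (Edge n m)} {i : Fin n}
    (hFa : ∀ e ∈ F, e.1 ≠ i) (hρ : IsBMatching b F ρ) (hS : S ⊆ G)
    (hGa : ∀ e ∈ G, e.1 = i) (hScard : S.card ≤ b i)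
    (hStasks : ∀ e ∈ S, e.2 ∉ mt ρ)
    (hSinj : ∀ e ∈ S, ∀ f ∈ S, e.2 = f.2 → e = f) :
    IsBMatching b (F ∪ G) (ρ ∪ S) ∧ mt (ρ ∪ S) = mt ρ ∪ mt S := by
  constructor
  · refine ⟨Finset.union_subset_union hρ.1 hS, fun x => ?_, fun t => ?_⟩
    · have hdu : deg (ρ ∪ S) x ≤ deg ρ x + deg S x := by
        simp only [deg, Finset.filter_union]
        exact Finset.card_union_le _ _
      by_cases hx : x = i
      · subst hx
        have hρ0 : deg ρ x = 0 := by
          simp only [deg, Finset.card_eq_zero, Finset.filter_eq_empty_iff]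
          intro e he
          exact hFa e (hρ.1 he)
        have hS1 : deg S x ≤ S.card := Finset.card_le_card (Finset.filter_subset _ _)
        omega
      · have hS0 : deg S x = 0 := by
          simp only [deg, Finset.card_eq_zero, Finset.filter_eq_empty_iff]
          intro e he hex
          exact hx (hex ▸ (hGa e (hS he)).symm).symm
        have := hρ.2.1 x
        omega
    · have hdu : ((ρ ∪ S).filter (fun e => e.2 = t)).card ≤
          (ρ.filter (fun e => e.2 = t)).card + (S.filter (fun e => e.2 = t)).card := by
        simp only [Finset.filter_union]
        exact Finset.card_union_le _ _
      by_cases ht : t ∈ mt S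
      · have hρ0 : (ρ.filter (fun e => e.2 = t)).card = 0 := by
          rw [Finset.card_eq_zero, Finset.filter_eq_empty_iff]
          intro e he het
          obtain ⟨f, hf, hft⟩ := mem_mt.1 ht
          apply hStasks f hf
          rw [hft]
          exact mem_mt.2 ⟨e, he, het⟩
        have hS1 : (S.filter (fun e => e.2 = t)).card ≤ 1 := by
          rw [Finset.card_le_one]
          intro e he f hf
          exact hSinj e (Finset.mem_filter.1 he).1 f (Finset.mem_filter.1 hf).1
            ((Finset.mem_filter.1 he).2.trans (Finset.mem_filter.1 hf).2.symm)
        omega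
      · have hS0 : (S.filter (fun e => e.2 = t)).card = 0 := by
          rw [Finset.card_eq_zero, Finset.filter_eq_empty_iff]
          intro e he het
          exact ht (het ▸ mem_mt.2 ⟨e, he, rfl⟩)
        have := hρ.2.2 t
        omega
  · exact mt_union ρ S

lemma mt_split_agent (μ : Finset (Edge n m)) (i : Fin n) :
    mt μ = mt (μ.filter (fun e => e.1 ≠ i)) ∪ mt (μ.filter (fun e => e.1 = i)) := by
  rw [← mt_union]
  congr 1
  ext e
  simp only [Finset.mem_union, Finset.mem_filter]
  constructor
  · intro h
    by_cases he : e.1 = i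
    · exact Or.inr ⟨h, he⟩
    · exact Or.inl ⟨h, he⟩
  · rintro (⟨h, _⟩ | ⟨h, _⟩) <;> exact h

/-- the exchange/growing argument -/
lemma grow_contradiction {b : Fin n → ℕ} {F : Finset (Edge n m)} {A BF : Finset (Fin m)}
    {j : Fin m} {P : Finset (Fin m)}
    (hmaxA : ∀ C, Cov b F C → C ⊆ P → C.card ≤ A.card)
    (hAP : A ⊆ P) (hjP : j ∉ P)
    (hAj : Cov b F (insert j A)) (hBF : Cov b F BF) (hBFP : BF ⊆ P)
    (hBFj : ¬ Cov b F (insert j BF)) : False := by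
  classical
  have hjA : j ∉ A := fun h => hjP (hAP h)
  have hcardAj : (insert j A).card = A.card + 1 := Finset.card_insert_of_notMem hjA
  have key : ∀ (d : ℕ) (Y : Finset (Fin m)), Cov b F Y → BF ⊆ Y →
      Y ⊆ BF ∪ insert j A → Y.card + d = A.card + 1 → False := by
    intro d
    induction d with
    | zero =>
      intro Y hY hBFY hYsub hYcard
      by_cases hjY : j ∈ Y
      · exact hBFj (cov_subset hY (Finset.insert_subset hjY hBFY))
      · have hYP : Y ⊆ P := by
          intro x hx
          rcases Finset.mem_union.1 (hYsub hx) with h | h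
          · exact hBFP h
          · rcases Finset.mem_insert.1 h with rfl | h
            · exact absurd hx hjY
            · exact hAP h
        have := hmaxA Y hY hYP
        omega
    | succ d ih =>
      intro Y hY hBFY hYsub hYcard
      have hlt : Y.card < (insert j A).card := by omega
      obtain ⟨u, hu, hucov⟩ := core3 hAj hY hlt
      have huY : u ∉ Y := (Finset.mem_sdiff.1 hu).2
      apply ih (insert u Y) hucov (hBFY.trans (Finset.subset_insert _ _))
        (Finset.insert_subset (Finset.mem_union_right _ (Finset.mem_sdiff.1 hu).1)
          hYsub)
      rw [Finset.card_insert_of_notMem huY]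
      omega
  have hBFA : BF.card ≤ A.card := hmaxA BF hBF hBFP
  exact key (A.card + 1 - BF.card) BF hBF (Finset.Subset.refl _)
    (Finset.subset_union_left) (by omega)

/-- parallel induction: the greedy matched set only grows when agent i's edges are added -/
lemma mono_master (cost1 cost2 : List (Edge n m) → ℕ) (b : Fin n → ℕ)
    {F G : Finset (Edge n m)} {i : Fin n}
    (hFa : ∀ e ∈ F, e.1 ≠ i) (hGa : ∀ e ∈ G, e.1 = i) :
    ∀ (L : List (Fin m)) (μA μB : Finset (Edge n m)) (P : Finset (Fin m)),
    L.Nodup → (∀ j ∈ L, j ∉ P) →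
    IsBMatching b F μA → mt μA ⊆ P →
    (∀ C, Cov b F C → C ⊆ P → C.card ≤ (mt μA).card) →
    IsBMatching b (F ∪ G) μB → mt μB ⊆ P →
    (∀ C, Cov b (F ∪ G) C → C ⊆ P → C.card ≤ (mt μB).card) →
    mt μA ⊆ mt μB →
    mt (L.foldl (stepFn cost1 b F) μA) ⊆ mt (L.foldl (stepFn cost2 b (F ∪ G)) μB) := by
  intro L
  induction L with
  | nil => intro μA μB P _ _ _ _ _ _ _ _ hAB; exact hAB
  | cons j L' ih =>
    intro μA μB P hnd hnotin hμA hAP hmaxA hμB hBP hmaxB hAB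
    have hjP : j ∉ P := hnotin j List.mem_cons_self
    have hjA : j ∉ mt μA := fun h => hjP (hAP h)
    have hjB : j ∉ mt μB := fun h => hjP (hBP h)
    obtain ⟨sA1, sA2, sA3⟩ := step_inv (cost := cost1) hμA hAP hmaxA hjP
    obtain ⟨sB1, sB2, sB3⟩ := step_inv (cost := cost2) hμB hBP hmaxB hjP
    have hmtA' := step_mt (cost := cost1) hμA hjA
    have hmtB' := step_mt (cost := cost2) hμB hjB
    -- key: matched set of the bigger run dominates
    have hAB' : mt (stepFn cost1 b F μA j) ⊆ mt (stepFn cost2 b (F ∪ G) μB j) := by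
      by_cases hcovA : Cov b F (insert j (mt μA))
      · -- A's run matches j; show B's run does too
        have hcovB : Cov b (F ∪ G) (insert j (mt μB)) := by
          by_contra hnc
          set μBF : Finset (Edge n m) := μB.filter (fun e => e.1 ≠ i) with hμBFdef
          set Sside : Finset (Edge n m) := μB.filter (fun e => e.1 = i) with hSdef
          set BF : Finset (Fin m) := mt μBF with hBFdef
          have hμBF : IsBMatching b F μBF := by
            refine ⟨?_, (filter_agent_bmatching hμB _).2.1,
              (filter_agent_bmatching hμB _).2.2⟩
            intro e he
            obtain ⟨heμ, hei⟩ := Finset.mem_filter.1 he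
            rcases Finset.mem_union.1 (hμB.1 heμ) with h | h
            · exact h
            · exact absurd (hGa e h) hei
          have hcovBF : Cov b F BF := ⟨μBF, hμBF, rfl⟩
          have hBsplit : mt μB = BF ∪ mt Sside := mt_split_agent μB i
          have hBFP : BF ⊆ P := by
            intro t ht
            apply hBP
            rw [hBsplit]
            exact Finset.mem_union_left _ ht
          have hnBFj : ¬ Cov b F (insert j BF) := by
            intro hcov
            apply hnc
            obtain ⟨ρ, hρ, hmtρ⟩ := hcov
            have hSsub : Sside ⊆ G := by
              intro e he
              obtain ⟨heμ, hei⟩ := Finset.mem_filter.1 he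
              rcases Finset.mem_union.1 (hμB.1 heμ) with h | h
              · exact absurd hei (hFa e h)
              · exact h
            have hScard : Sside.card ≤ b i := hμB.2.1 i
            have hStasks : ∀ e ∈ Sside, e.2 ∉ mt ρ := by
              intro e he hc
              rw [hmtρ] at hc
              rcases Finset.mem_insert.1 hc with h | h
              · exact hjB (h ▸ mem_mt.2 ⟨e, (Finset.mem_filter.1 he).1, rfl⟩)
              · obtain ⟨f, hf, hft⟩ := mem_mt.1 h
                have hfμ : f ∈ μB := (Finset.mem_filter.1 hf).1
                have hefeq : e = f :=
                  task_inj hμB (Finset.mem_filter.1 he).1 hfμ hft.symm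
                exact (Finset.mem_filter.1 hf).2 (hefeq ▸ (Finset.mem_filter.1 he).2)
            have hSinj : ∀ e ∈ Sside, ∀ f ∈ Sside, e.2 = f.2 → e = f :=
              fun e he f hf h =>
                task_inj hμB (Finset.mem_filter.1 he).1 (Finset.mem_filter.1 hf).1 h
            obtain ⟨hcm, hcmt⟩ := compose hFa hρ hSsub hGa hScard hStasks hSinj
            refine ⟨ρ ∪ Sside, hcm, ?_⟩
            rw [hcmt, hmtρ, hBsplit, Finset.insert_union]
          exact grow_contradiction hmaxA hAP hjP hcovA hcovBF hBFP hnBFj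
        rw [hmtA', hmtB', if_pos hcovA, if_pos hcovB]
        exact Finset.insert_subset_insert _ hAB
      · -- A's run does not match j
        rw [hmtA', if_neg hcovA]
        apply hAB.trans
        rw [hmtB']
        split
        · exact Finset.subset_insert _ _
        · exact Finset.Subset.refl _
    -- recurse
    have hA'sub : mt (stepFn cost1 b F μA j) ⊆ insert j P := by
      rcases sA2 with h | h
      · rw [h]; exact hAP.trans (Finset.subset_insert _ _)
      · rw [h]; exact Finset.insert_subset_insert _ hAP
    have hB'sub : mt (stepFn cost2 b (F ∪ G) μB j) ⊆ insert j P := by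
      rcases sB2 with h | h
      · rw [h]; exact hBP.trans (Finset.subset_insert _ _)
      · rw [h]; exact Finset.insert_subset_insert _ hBP
    have hnotin' : ∀ j' ∈ L', j' ∉ insert j P := by
      intro j' hj'
      rw [Finset.mem_insert]
      push_neg
      exact ⟨fun hc => (List.nodup_cons.1 hnd).1 (hc ▸ hj'),
        hnotin j' (List.mem_cons_of_mem _ hj')⟩
    exact ih _ _ (insert j P) (List.nodup_cons.1 hnd).2 hnotin'
      sA1 hA'sub sA3 sB1 hB'sub sB3 hAB'

end PoA
namespace PoA
open Finset

variable {n m : ℕ}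

lemma greedy_mono (cost1 cost2 : List (Edge n m) → ℕ) (b : Fin n → ℕ) (q : Fin m → ℝ)
    {F G : Finset (Edge n m)} {i : Fin n}
    (hFa : ∀ e ∈ F, e.1 ≠ i) (hGa : ∀ e ∈ G, e.1 = i) :
    mt (runAug cost1 b q F) ⊆ mt (runAug cost2 b q (F ∪ G)) := by
  rw [runAug_eq_foldl, runAug_eq_foldl]
  refine mono_master cost1 cost2 b hFa hGa (sortedTasks m q) ∅ ∅ ∅ (sortedTasks_nodup q)
    (by simp) (bmatching_empty b F) (by simp) ?_ (bmatching_empty b (F ∪ G)) (by simp) ?_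
    (by simp) <;>
  · intro C hC hCe
    rw [Finset.subset_empty] at hCe
    simp [hCe]

lemma profile_agents {E : Finset (Edge n m)} {D : Fin n → Finset (Edge n m)}
    (hD : ∀ i, D i ⊆ agentEdges E i) {e : Edge n m} {i : Fin n} (he : e ∈ D i) :
    e.1 = i := by
  have := hD i he
  exact (Finset.mem_filter.1 this).2

lemma profile_update {E : Finset (Edge n m)} {D : Fin n → Finset (Edge n m)}
    (hD : ∀ i, D i ⊆ agentEdges E i) (i : Fin n) (S : Finset (Edge n m)) :
    profileInput (Function.update D i S)
      = (profileInput D).filter (fun e => e.1 ≠ i) ∪ S := by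
  ext e
  simp only [profileInput, Finset.mem_biUnion, Finset.mem_univ, true_and,
    Finset.mem_union, Finset.mem_filter]
  constructor
  · rintro ⟨i', hi'⟩
    by_cases h : i' = i
    · subst h
      rw [Function.update_self] at hi'
      exact Or.inr hi'
    · rw [Function.update_of_ne h] at hi'
      refine Or.inl ⟨⟨i', hi'⟩, ?_⟩
      rw [profile_agents hD hi']
      exact h
  · rintro (⟨⟨i', hi'⟩, hne⟩ | hS)
    · have hi : i' ≠ i := fun h => hne (h ▸ profile_agents hD hi')
      exact ⟨i', by rw [Function.update_of_ne hi]; exact hi'⟩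
    · exact ⟨i, by rw [Function.update_self]; exact hS⟩

lemma profile_split {E : Finset (Edge n m)} {D : Fin n → Finset (Edge n m)}
    (_hD : ∀ i, D i ⊆ agentEdges E i) (i : Fin n) :
    profileInput D = (profileInput D).filter (fun e => e.1 ≠ i)
      ∪ (profileInput D).filter (fun e => e.1 = i) := by
  ext e
  simp only [Finset.mem_union, Finset.mem_filter]
  constructor
  · intro h
    by_cases he : e.1 = i
    · exact Or.inr ⟨h, he⟩
    · exact Or.inl ⟨h, he⟩
  · rintro (⟨h, _⟩ | ⟨h, _⟩) <;> exact h

lemma util_eq_weight_filter (q : Fin m → ℝ) (i : Fin n) (μ : Finset (Edge n m)) :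
    util q i μ = weight q (μ.filter (fun e => e.1 = i)) := rfl

lemma weight_split_agent (q : Fin m → ℝ) (i : Fin n) (μ : Finset (Edge n m)) :
    weight q μ = weight q (μ.filter (fun e => e.1 = i))
      + weight q (μ.filter (fun e => ¬ e.1 = i)) := by
  rw [weight, ← Finset.sum_filter_add_sum_filter_not μ (fun e => e.1 = i)]
  rfl

/-- Per-agent bound at a Nash equilibrium (Lemma X). -/
lemma agent_bound (cost : List (Edge n m) → ℕ) (b : Fin n → ℕ) (q : Fin m → ℝ)
    (hq : ∀ j, 0 < q j) {E : Finset (Edge n m)} {D : Fin n → Finset (Edge n m)}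
    (hNE : IsNE (runAug cost b q) q E D) (i : Fin n)
    {μ : Finset (Edge n m)} (hμ : IsBMatching b E μ) :
    ∑ e ∈ μ.filter (fun e => e.2 ∉ mt (runAug cost b q (profileInput D)) ∧ e.1 = i), q e.2
      ≤ util q i (runAug cost b q (profileInput D)) := by
  classical
  set E' : Finset (Edge n m) := profileInput D with hE'
  set μstar : Finset (Edge n m) := runAug cost b q E' with hμstar
  set S : Finset (Edge n m) := μ.filter (fun e => e.2 ∉ mt μstar ∧ e.1 = i) with hSdef
  have hD : ∀ i', D i' ⊆ agentEdges E i' := fun i' => (hNE.1 i').1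
  by_cases hSne : S.Nonempty
  · -- deviation to S
    have hSsub : S ⊆ agentEdges E i := by
      intro e he
      obtain ⟨heμ, _, hei⟩ := Finset.mem_filter.1 he
      exact Finset.mem_filter.2 ⟨hμ.1 heμ, hei⟩
    have hNE2 := hNE.2 i S hSsub hSne
    set F : Finset (Edge n m) := E'.filter (fun e => e.1 ≠ i) with hF
    have hE2 : profileInput (Function.update D i S) = F ∪ S := profile_update hD i S
    set ν : Finset (Edge n m) := runAug cost b q (F ∪ S) with hν
    rw [hE2] at hNE2
    -- facts about F
    have hFa : ∀ e ∈ F, e.1 ≠ i := fun e he => (Finset.mem_filter.1 he).2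
    have hSa : ∀ e ∈ S, e.1 = i := fun e he => (Finset.mem_filter.1 he).2.2
    set ρF : Finset (Edge n m) := runAug cost b q F with hρF
    have hρFb : IsBMatching b F ρF := runAug_bmatching cost b q F
    -- monotonicity: tasks matched by the F-run are matched by the E'-run
    have hmono : mt ρF ⊆ mt μstar := by
      have := greedy_mono cost cost b q (G := E'.filter (fun e => e.1 = i)) hFa
        (fun e he => (Finset.mem_filter.1 he).2)
      rw [← profile_split hD i] at this
      exact this
    -- compose ρF with S
    have hScard : S.card ≤ b i := by
      have h1 : S ⊆ μ.filter (fun e => e.1 = i) := by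
        intro e he
        obtain ⟨heμ, _, hei⟩ := Finset.mem_filter.1 he
        exact Finset.mem_filter.2 ⟨heμ, hei⟩
      exact (Finset.card_le_card h1).trans (hμ.2.1 i)
    have hStasks : ∀ e ∈ S, e.2 ∉ mt ρF := by
      intro e he hc
      exact (Finset.mem_filter.1 he).2.1 (hmono hc)
    have hSinj : ∀ e ∈ S, ∀ f ∈ S, e.2 = f.2 → e = f := fun e he f hf h =>
      task_inj hμ (Finset.mem_filter.1 he).1 (Finset.mem_filter.1 hf).1 h
    obtain ⟨hcomp, _⟩ := compose (G := S) hFa hρFb (Finset.Subset.refl S) hSa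
      hScard hStasks hSinj
    -- weight bounds
    have hw1 : weight q (ρF ∪ S) ≤ weight q ν :=
      runAug_max cost b q hq (F ∪ S) hcomp
    have hdisj : Disjoint ρF S := by
      rw [Finset.disjoint_left]
      intro e he hc
      exact hStasks e hc (mem_mt.2 ⟨e, he, rfl⟩)
    have hw2 : weight q (ρF ∪ S) = weight q ρF + weight q S := by
      rw [weight, Finset.sum_union hdisj]
      rfl
    have hνF : IsBMatching b F (ν.filter (fun e => ¬ e.1 = i)) := by
      have hνb : IsBMatching b (F ∪ S) ν := runAug_bmatching cost b q (F ∪ S)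
      refine ⟨?_, (filter_agent_bmatching hνb _).2.1, (filter_agent_bmatching hνb _).2.2⟩
      intro e he
      obtain ⟨heν, hei⟩ := Finset.mem_filter.1 he
      rcases Finset.mem_union.1 (hνb.1 heν) with h | h
      · exact h
      · exact absurd (hSa e h) hei
    have hw3 : weight q (ν.filter (fun e => ¬ e.1 = i)) ≤ weight q ρF :=
      runAug_max cost b q hq F hνF
    have hsplit := weight_split_agent q i ν
    have hutil : util q i ν = weight q ν - weight q (ν.filter (fun e => ¬ e.1 = i)) := by
      rw [util_eq_weight_filter]
      linarith [hsplit]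
    have hkey : weight q S ≤ util q i ν := by
      rw [hutil]
      linarith [hw1, hw2, hw3]
    exact le_trans hkey hNE2
  · -- S empty : the sum is zero
    rw [Finset.not_nonempty_iff_eq_empty] at hSne
    rw [hSne]
    simp only [Finset.sum_empty]
    rw [util]
    apply Finset.sum_nonneg
    intro e _
    exact (hq e.2).le

end PoA
namespace PoA
open Finset

variable {n m : ℕ}

theorem poa_upper (cost : List (Edge n m) → ℕ) (b : Fin n → ℕ) (q : Fin m → ℝ)
    (hq : ∀ j, 0 < q j) (E : Finset (Edge n m)) (D : Fin n → Finset (Edge n m))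
    (hNE : IsNE (runAug cost b q) q E D) (μ : Finset (Edge n m))
    (hμ : IsMaxMatching b q E μ) :
    weight q μ ≤ 2 * weight q (runAug cost b q (profileInput D)) := by
  classical
  set μstar : Finset (Edge n m) := runAug cost b q (profileInput D) with hms
  have hμb : IsBMatching b E μ := hμ.1
  have hstarb : IsBMatching b (profileInput D) μstar := runAug_bmatching cost b q _
  have hsplit : weight q μ = (∑ e ∈ μ.filter (fun e => e.2 ∈ mt μstar), q e.2)
      + (∑ e ∈ μ.filter (fun e => ¬ e.2 ∈ mt μstar), q e.2) := by
    rw [weight, ← Finset.sum_filter_add_sum_filter_not μ (fun e => e.2 ∈ mt μstar)]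
  have h1 : (∑ e ∈ μ.filter (fun e => e.2 ∈ mt μstar), q e.2) ≤ weight q μstar := by
    have hfb : IsBMatching b E (μ.filter (fun e => e.2 ∈ mt μstar)) :=
      filter_agent_bmatching hμb _
    have heq : (∑ e ∈ μ.filter (fun e => e.2 ∈ mt μstar), q e.2)
        = ∑ t ∈ mt (μ.filter (fun e => e.2 ∈ mt μstar)), q t := weight_eq_sum_mt q hfb
    rw [heq, weight_eq_sum_mt q hstarb]
    apply Finset.sum_le_sum_of_subset_of_nonneg
    · intro t ht
      obtain ⟨e, he, rfl⟩ := mem_mt.1 ht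
      exact (Finset.mem_filter.1 he).2
    · intro t _ _
      exact (hq t).le
  have h2 : (∑ e ∈ μ.filter (fun e => ¬ e.2 ∈ mt μstar), q e.2) ≤ weight q μstar := by
    have hfib : ∀ i : Fin n,
        (μ.filter (fun e => ¬ e.2 ∈ mt μstar)).filter (fun e => e.1 = i)
        = μ.filter (fun e => e.2 ∉ mt μstar ∧ e.1 = i) := by
      intro i
      rw [Finset.filter_filter]
    calc ∑ e ∈ μ.filter (fun e => ¬ e.2 ∈ mt μstar), q e.2
        = ∑ i, ∑ e ∈ (μ.filter (fun e => ¬ e.2 ∈ mt μstar)).filter (fun e => e.1 = i),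
            q e.2 :=
          (Finset.sum_fiberwise _ Prod.fst _).symm
      _ ≤ ∑ i, util q i μstar := by
          apply Finset.sum_le_sum
          intro i _
          rw [hfib i]
          exact agent_bound cost b q hq hNE i hμb
      _ = weight q μstar := (weight_eq_sum_util q μstar).symm
  linarith

end PoA
namespace PoA
open Finset

/-- single-edge augmenting path -/
lemma single_path {n m : ℕ} {b : Fin n → ℕ} {E' μ : Finset (Edge n m)} {j : Fin m}
    {e : Edge n m} (heE : e ∈ E') (heμ : e ∉ μ) (hej : e.2 = j)
    (hunsat : deg μ e.1 < b e.1) : IsAugPathFrom b E' μ j [e] := by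
  refine ⟨by simp, ?_, ?_, ?_, ?_, ?_, by simp, by simp⟩
  · intro g hg
    simp only [List.head?_cons, Option.mem_some_iff] at hg
    rw [← hg, hej]
  · intro g hg
    simp only [List.mem_singleton] at hg
    rw [hg]
    exact ⟨heE, heμ⟩
  · intro k hk
    simp only [List.length_cons, List.length_nil] at hk
    omega
  · intro k hk
    simp only [List.length_cons, List.length_nil] at hk
    omega
  · intro g hg
    simp only [List.getLast?_singleton, Option.mem_some_iff] at hg
    rw [← hg]
    exact hunsat

/-- two-edge augmenting path -/
lemma two_path {n m : ℕ} {b : Fin n → ℕ} {E' μ : Finset (Edge n m)} {j : Fin m}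
    {e f : Edge n m} (heE : e ∈ E') (heμ : e ∉ μ) (hej : e.2 = j)
    (hfE : f ∈ E') (hfμ : f ∉ μ) (hm : (e.1, f.2) ∈ μ)
    (hsat : b e.1 ≤ deg μ e.1) (hunsat : deg μ f.1 < b f.1)
    (hnea : e.1 ≠ f.1) (hnet : e.2 ≠ f.2) : IsAugPathFrom b E' μ j [e, f] := by
  refine ⟨by simp, ?_, ?_, ?_, ?_, ?_, by simp [hnea], by simp [hnet]⟩
  · intro g hg
    simp only [List.head?_cons, Option.mem_some_iff] at hg
    rw [← hg, hej]
  · intro g hg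
    simp only [List.mem_cons, List.mem_singleton] at hg
    rcases hg with rfl | rfl | h
    · exact ⟨heE, heμ⟩
    · exact ⟨hfE, hfμ⟩
    · exact absurd h List.not_mem_nil
  · intro k hk
    simp only [List.length_cons, List.length_nil] at hk
    have hk0 : k = 0 := by omega
    subst hk0
    exact hm
  · intro k hk
    simp only [List.length_cons, List.length_nil] at hk
    have hk0 : k = 0 := by omega
    subst hk0
    exact hsat
  · intro g hg
    simp only [List.getLast?_cons_cons, List.getLast?_singleton,
      Option.mem_some_iff] at hg
    rw [← hg]
    exact hunsat

/-- structure of augmenting paths w.r.t. the empty matching -/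
lemma aug_empty_char {n m : ℕ} {b : Fin n → ℕ} {E' : Finset (Edge n m)} {j : Fin m}
    {p : List (Edge n m)} (hp : IsAugPathFrom b E' (∅ : Finset (Edge n m)) j p) :
    ∃ e, p = [e] ∧ e ∈ E' ∧ e.2 = j := by
  rcases p with _ | ⟨e, rest⟩
  · exact absurd rfl hp.ne
  · rcases rest with _ | ⟨f, r⟩
    · exact ⟨e, rfl, (hp.mem e (by simp)).1, hp.starts e (by simp)⟩
    · have := hp.matched 0 (by simp)
      simp at this

/-- evaluation of selectPath when the minimal path is unique -/
lemma selectPath_eval {n m : ℕ} {cost : List (Edge n m) → ℕ} {b : Fin n → ℕ}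
    {E' μ : Finset (Edge n m)} {j : Fin m} {p₀ : List (Edge n m)}
    (hpath : IsAugPathFrom b E' μ j p₀)
    (hmin : ∀ p, IsAugPathFrom b E' μ j p → cost p₀ ≤ cost p)
    (huniq : ∀ p, IsAugPathFrom b E' μ j p → cost p ≤ cost p₀ → p = p₀) :
    selectPath cost b E' μ j = some p₀ := by
  have hcond : ∃ p, IsAugPathFrom b E' μ j p ∧
      ∀ p', IsAugPathFrom b E' μ j p' → cost p ≤ cost p' := ⟨p₀, hpath, hmin⟩
  unfold selectPath
  rw [dif_pos hcond]
  rw [Option.some.injEq]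
  obtain ⟨hp, hminp⟩ := hcond.choose_spec
  exact huniq _ hp (hminp p₀ hpath)

lemma stepFn_some {n m : ℕ} {cost : List (Edge n m) → ℕ} {b : Fin n → ℕ}
    {E' μ : Finset (Edge n m)} {j : Fin m} {p : List (Edge n m)}
    (h : selectPath cost b E' μ j = some p) :
    stepFn cost b E' μ j = applyPath μ p := by
  unfold stepFn
  rw [h]

lemma stepFn_none {n m : ℕ} {cost : List (Edge n m) → ℕ} {b : Fin n → ℕ}
    {E' μ : Finset (Edge n m)} {j : Fin m}
    (h : ¬ ∃ p, IsAugPathFrom b E' μ j p) :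
    stepFn cost b E' μ j = μ := by
  unfold stepFn
  rw [selectPath_none h]

end PoA
namespace PoA
open Finset

abbrev a00 : Edge 2 2 := (0, 0)
abbrev a01 : Edge 2 2 := (0, 1)
abbrev a10 : Edge 2 2 := (1, 0)

lemma path_length_le {n m : ℕ} {b : Fin n → ℕ} {E' μ : Finset (Edge n m)} {j : Fin m}
    {p : List (Edge n m)} (hp : IsAugPathFrom b E' μ j p) : p.length ≤ n := by
  have h := hp.agentsNodup.length_le_card
  simpa using h

lemma sortedTasks_eval {ε : ℝ} (hε : 0 < ε) : sortedTasks 2 ![1+ε, 1] = [0, 1] := by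
  have h1 : (![1+ε, 1] : Fin 2 → ℝ) 1 ≤ ![1+ε, 1] 0 := by
    simp only [Matrix.cons_val_zero, Matrix.cons_val_one, Matrix.head_cons]
    linarith
  unfold sortedTasks
  have hfr : List.finRange 2 = [0, 1] := by decide
  rw [hfr]
  simp [List.insertionSort, List.orderedInsert, h1, hε.le]

section scenarios
variable {cost : List (Edge 2 2) → ℕ}

lemma mem_pairE {e : Edge 2 2} (h : e ∈ ({a00, a10} : Finset (Edge 2 2))) :
    e = a00 ∨ e = a10 := by
  rcases Finset.mem_insert.1 h with h | h
  · exact Or.inl h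
  · exact Or.inr (by simpa using h)

lemma stepA1 (hc : cost [a00] < cost [a10]) :
    stepFn cost (fun _ => 1) {a00, a10} ∅ 0 = {a00} := by
  have hpath : IsAugPathFrom (fun _ => 1) {a00, a10} ∅ 0 [a00] :=
    single_path (by decide) (by decide) (by decide) (by decide)
  have hsel : selectPath cost (fun _ => 1) {a00, a10} ∅ 0 = some [a00] := by
    apply selectPath_eval hpath
    · intro p hp
      obtain ⟨e, rfl, heE, _⟩ := aug_empty_char hp
      rcases mem_pairE heE with rfl | rfl
      · exact le_refl _
      · exact hc.le
    · intro p hp hle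
      obtain ⟨e, rfl, heE, _⟩ := aug_empty_char hp
      rcases mem_pairE heE with rfl | rfl
      · rfl
      · exact absurd hle (by omega)
  rw [stepFn_some hsel]
  decide

lemma stepA2 : stepFn cost (fun _ => 1) {a00, a10} {a00} 1 = {a00} := by
  apply stepFn_none
  rintro ⟨p, hp⟩
  rcases p with _ | ⟨e, rest⟩
  · exact absurd rfl hp.ne
  · have hej : e.2 = 1 := hp.starts e (by simp)
    have heE := (hp.mem e (by simp)).1
    rcases mem_pairE heE with rfl | rfl <;> exact absurd hej (by decide)

lemma stepB1 : stepFn cost (fun _ => 1) {a01, a10} ∅ 0 = {a10} := by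
  have hpath : IsAugPathFrom (fun _ => 1) {a01, a10} ∅ 0 [a10] :=
    single_path (by decide) (by decide) (by decide) (by decide)
  have hchar : ∀ p, IsAugPathFrom (fun _ => 1) ({a01, a10} : Finset (Edge 2 2)) ∅ 0 p →
      p = [a10] := by
    intro p hp
    obtain ⟨e, rfl, heE, hej⟩ := aug_empty_char hp
    rcases Finset.mem_insert.1 heE with h | h
    · exact absurd (h ▸ hej) (by decide)
    · rw [Finset.mem_singleton] at h
      rw [h]
  have hsel : selectPath cost (fun _ => 1) {a01, a10} ∅ 0 = some [a10] := by
    apply selectPath_eval hpath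
    · intro p hp
      rw [hchar p hp]
    · intro p hp _
      exact hchar p hp
  rw [stepFn_some hsel]
  decide

lemma stepB2 : stepFn cost (fun _ => 1) {a01, a10} {a10} 1 = {a01, a10} := by
  have hpath : IsAugPathFrom (fun _ => 1) {a01, a10} {a10} 1 [a01] :=
    single_path (by decide) (by decide) (by decide) (by decide)
  have hchar : ∀ p, IsAugPathFrom (fun _ => 1) ({a01, a10} : Finset (Edge 2 2))
      {a10} 1 p → p = [a01] := by
    intro p hp
    have hlen := path_length_le hp
    rcases p with _ | ⟨e, _ | ⟨f, _ | ⟨g, r⟩⟩⟩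
    · exact absurd rfl hp.ne
    · have hej : e.2 = 1 := hp.starts e (by simp)
      have heE := (hp.mem e (by simp)).1
      rcases Finset.mem_insert.1 heE with h | h
      · rw [h]
      · rw [Finset.mem_singleton] at h
        exact absurd (h ▸ hej) (by decide)
    · have hej : e.2 = 1 := hp.starts e (by simp)
      have heE := (hp.mem e (by simp)).1
      have he : e = a01 := by
        rcases Finset.mem_insert.1 heE with h | h
        · exact h
        · rw [Finset.mem_singleton] at h
          exact absurd (h ▸ hej) (by decide)
      have hm := hp.matched 0 (by simp)
      subst he
      simp only [List.get] at hm
      rw [Finset.mem_singleton] at hm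
      have h01 : (0 : Fin 2) = 1 := congrArg Prod.fst hm
      exact absurd h01 (by decide)
    · simp only [List.length_cons] at hlen
      omega
  have hsel : selectPath cost (fun _ => 1) {a01, a10} {a10} 1 = some [a01] := by
    apply selectPath_eval hpath
    · intro p hp
      rw [hchar p hp]
    · intro p hp _
      exact hchar p hp
  rw [stepFn_some hsel]
  decide

lemma mem_tripleE {e : Edge 2 2} (h : e ∈ ({a00, a01, a10} : Finset (Edge 2 2))) :
    e = a00 ∨ e = a01 ∨ e = a10 := by
  rcases Finset.mem_insert.1 h with h | h
  · exact Or.inl h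
  · rcases Finset.mem_insert.1 h with h | h
    · exact Or.inr (Or.inl h)
    · exact Or.inr (Or.inr (by simpa using h))

lemma stepC1 (hc : cost [a00] < cost [a10]) :
    stepFn cost (fun _ => 1) {a00, a01, a10} ∅ 0 = {a00} := by
  have hpath : IsAugPathFrom (fun _ => 1) {a00, a01, a10} ∅ 0 [a00] :=
    single_path (by decide) (by decide) (by decide) (by decide)
  have hsel : selectPath cost (fun _ => 1) {a00, a01, a10} ∅ 0 = some [a00] := by
    apply selectPath_eval hpath
    · intro p hp
      obtain ⟨e, rfl, heE, hej⟩ := aug_empty_char hp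
      rcases mem_tripleE heE with rfl | rfl | rfl
      · exact le_refl _
      · exact absurd hej (by decide)
      · exact hc.le
    · intro p hp hle
      obtain ⟨e, rfl, heE, hej⟩ := aug_empty_char hp
      rcases mem_tripleE heE with rfl | rfl | rfl
      · rfl
      · exact absurd hej (by decide)
      · exact absurd hle (by omega)
  rw [stepFn_some hsel]
  decide

lemma stepC2 : stepFn cost (fun _ => 1) {a00, a01, a10} {a00} 1 = {a01, a10} := by
  have hpath : IsAugPathFrom (fun _ => 1) {a00, a01, a10} {a00} 1 [a01, a10] :=
    two_path (by decide) (by decide) (by decide) (by decide) (by decide) (by decide)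
      (by decide) (by decide) (by decide) (by decide)
  have hchar : ∀ p, IsAugPathFrom (fun _ => 1) ({a00, a01, a10} : Finset (Edge 2 2))
      {a00} 1 p → p = [a01, a10] := by
    intro p hp
    have hlen := path_length_le hp
    rcases p with _ | ⟨e, _ | ⟨f, _ | ⟨g, r⟩⟩⟩
    · exact absurd rfl hp.ne
    · have hej : e.2 = 1 := hp.starts e (by simp)
      have heE := (hp.mem e (by simp)).1
      have he : e = a01 := by
        rcases mem_tripleE heE with rfl | rfl | rfl
        · exact absurd hej (by decide)
        · rfl
        · exact absurd hej (by decide)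
      subst he
      have := hp.unsatLast a01 (by simp)
      exact absurd this (by decide)
    · have hej : e.2 = 1 := hp.starts e (by simp)
      have heE := (hp.mem e (by simp)).1
      have he : e = a01 := by
        rcases mem_tripleE heE with rfl | rfl | rfl
        · exact absurd hej (by decide)
        · rfl
        · exact absurd hej (by decide)
      subst he
      have hm := hp.matched 0 (by simp)
      simp only [List.get] at hm
      rw [Finset.mem_singleton] at hm
      have hf2 : f.2 = 0 := congrArg Prod.snd hm
      have hfE := (hp.mem f (by simp)).1
      have hfμ := (hp.mem f (by simp)).2
      have hf : f = a10 := by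
        rcases mem_tripleE hfE with rfl | rfl | rfl
        · exact absurd (Finset.mem_singleton_self a00) hfμ
        · exact absurd hf2 (by decide)
        · rfl
      rw [hf]
    · simp only [List.length_cons] at hlen
      omega
  have hsel : selectPath cost (fun _ => 1) {a00, a01, a10} {a00} 1 = some [a01, a10] := by
    apply selectPath_eval hpath
    · intro p hp
      rw [hchar p hp]
    · intro p hp _
      exact hchar p hp
  rw [stepFn_some hsel]
  decide

lemma runA {ε : ℝ} (hε : 0 < ε) (hc : cost [a00] < cost [a10]) :
    runAug cost (fun _ => 1) ![1+ε, 1] {a00, a10} = {a00} := by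
  rw [runAug_eq_foldl, sortedTasks_eval hε]
  show stepFn cost (fun _ => 1) {a00, a10} (stepFn cost (fun _ => 1) {a00, a10} ∅ 0) 1
    = {a00}
  rw [stepA1 hc, stepA2]

lemma runB {ε : ℝ} (hε : 0 < ε) :
    runAug cost (fun _ => 1) ![1+ε, 1] {a01, a10} = {a01, a10} := by
  rw [runAug_eq_foldl, sortedTasks_eval hε]
  show stepFn cost (fun _ => 1) {a01, a10} (stepFn cost (fun _ => 1) {a01, a10} ∅ 0) 1
    = {a01, a10}
  rw [stepB1, stepB2]

lemma runC {ε : ℝ} (hε : 0 < ε) (hc : cost [a00] < cost [a10]) :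
    runAug cost (fun _ => 1) ![1+ε, 1] {a00, a01, a10} = {a01, a10} := by
  rw [runAug_eq_foldl, sortedTasks_eval hε]
  show stepFn cost (fun _ => 1) {a00, a01, a10}
    (stepFn cost (fun _ => 1) {a00, a01, a10} ∅ 0) 1 = {a01, a10}
  rw [stepC1 hc, stepC2]

end scenarios
end PoA
namespace PoA
open Finset

lemma subset_pair {α : Type*} [DecidableEq α] {S : Finset α} {a b : α}
    (h : S ⊆ {a, b}) : S = ∅ ∨ S = {a} ∨ S = {b} ∨ S = {a, b} := by
  by_cases ha : a ∈ S <;> by_cases hb : b ∈ S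
  · right; right; right
    apply Finset.Subset.antisymm h
    intro x hx
    rcases Finset.mem_insert.1 hx with rfl | hx
    · exact ha
    · rw [Finset.mem_singleton] at hx
      subst hx
      exact hb
  · right; left
    apply Finset.Subset.antisymm ?_ (Finset.singleton_subset_iff.2 ha)
    intro x hx
    rcases Finset.mem_insert.1 (h hx) with rfl | h2
    · exact Finset.mem_singleton_self _
    · rw [Finset.mem_singleton] at h2
      subst h2
      exact absurd hx hb
  · right; right; left
    apply Finset.Subset.antisymm ?_ (Finset.singleton_subset_iff.2 hb)
    intro x hx
    rcases Finset.mem_insert.1 (h hx) with rfl | h2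
    · exact absurd hx ha
    · exact h2
  · left
    rw [Finset.eq_empty_iff_forall_notMem]
    intro x hx
    rcases Finset.mem_insert.1 (h hx) with rfl | h2
    · exact ha hx
    · rw [Finset.mem_singleton] at h2
      subst h2
      exact hb hx

lemma weight_singleton_a00 {ε : ℝ} : weight ![1+ε, 1] ({a00} : Finset (Edge 2 2)) = 1 + ε := by
  rw [weight, Finset.sum_singleton]
  simp

lemma weight_pair_BC {ε : ℝ} : weight ![1+ε, 1] ({a01, a10} : Finset (Edge 2 2)) = 2 + ε := by
  rw [weight, Finset.sum_pair (by decide)]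
  simp only [Matrix.cons_val_zero, Matrix.cons_val_one, Matrix.head_cons]
  ring

lemma util0_A {ε : ℝ} : util ![1+ε, 1] 0 ({a00} : Finset (Edge 2 2)) = 1 + ε := by
  rw [util, show ({a00} : Finset (Edge 2 2)).filter (fun e => e.1 = 0) = {a00} by decide,
    Finset.sum_singleton]
  simp

lemma util0_BC {ε : ℝ} : util ![1+ε, 1] 0 ({a01, a10} : Finset (Edge 2 2)) = 1 := by
  rw [util, show ({a01, a10} : Finset (Edge 2 2)).filter (fun e => e.1 = 0) = {a01} by decide,
    Finset.sum_singleton]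
  simp

lemma concrete_part (cost : List (Edge 2 2) → ℕ) (hc : cost [a00] < cost [a10])
    (ε : ℝ) (hε : 0 < ε) :
    ∃ D : Fin 2 → Finset (Edge 2 2),
      IsNE (runAug cost (fun _ => 1) ![1+ε, 1]) ![1+ε, 1]
        ({(0,0),(0,1),(1,0)} : Finset (Edge 2 2)) D ∧
      weight ![1+ε, 1] (runAug cost (fun _ => 1) ![1+ε, 1] (profileInput D)) = 1 + ε ∧
      ∃ μ, IsMaxMatching (fun _ => 1) ![1+ε, 1]
          ({(0,0),(0,1),(1,0)} : Finset (Edge 2 2)) μ ∧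
        weight ![1+ε, 1] μ = 2 + ε := by
  classical
  refine ⟨![{a00}, {a10}], ⟨?_, ?_⟩, ?_, ?_⟩
  · intro i
    fin_cases i <;> exact ⟨by decide, by decide⟩
  · -- no profitable deviation
    intro i S hS hSne
    have hprof : profileInput ![({a00} : Finset (Edge 2 2)), {a10}] = {a00, a10} := by
      decide
    fin_cases i
    · show util ![1+ε, 1] 0 (runAug cost (fun _ => 1) ![1+ε, 1]
          (profileInput (Function.update ![({a00} : Finset (Edge 2 2)), {a10}] 0 S))) ≤
        util ![1+ε, 1] 0 (runAug cost (fun _ => 1) ![1+ε, 1]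
          (profileInput ![({a00} : Finset (Edge 2 2)), {a10}]))
      replace hS : S ⊆ ({a00, a01} : Finset (Edge 2 2)) := by
        refine Finset.Subset.trans hS ?_
        show agentEdges ({(0,0),(0,1),(1,0)} : Finset (Edge 2 2)) 0 ⊆ {a00, a01}
        decide
      rcases subset_pair hS with rfl | rfl | rfl | rfl
      · exact absurd hSne (by simp)
      · have hup : profileInput (Function.update ![({a00} : Finset (Edge 2 2)), {a10}] 0
            {a00}) = {a00, a10} := by decide
        rw [hup, hprof, runA hε hc]
      · have hup : profileInput (Function.update ![({a00} : Finset (Edge 2 2)), {a10}] 0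
            {a01}) = {a01, a10} := by decide
        rw [hup, hprof, runA hε hc, runB hε, util0_A, util0_BC]
        linarith
      · have hup : profileInput (Function.update ![({a00} : Finset (Edge 2 2)), {a10}] 0
            {a00, a01}) = {a00, a01, a10} := by decide
        rw [hup, hprof, runA hε hc, runC hε hc, util0_A, util0_BC]
        linarith
    · show util ![1+ε, 1] 1 (runAug cost (fun _ => 1) ![1+ε, 1]
          (profileInput (Function.update ![({a00} : Finset (Edge 2 2)), {a10}] 1 S))) ≤
        util ![1+ε, 1] 1 (runAug cost (fun _ => 1) ![1+ε, 1]
          (profileInput ![({a00} : Finset (Edge 2 2)), {a10}]))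
      replace hS : S ⊆ ({a10} : Finset (Edge 2 2)) := by
        refine Finset.Subset.trans hS ?_
        show agentEdges ({(0,0),(0,1),(1,0)} : Finset (Edge 2 2)) 1 ⊆ {a10}
        decide
      rcases Finset.subset_singleton_iff.1 hS with rfl | rfl
      · exact absurd hSne (by simp)
      · have hupd : Function.update ![({a00} : Finset (Edge 2 2)), {a10}] 1 {a10}
            = ![({a00} : Finset (Edge 2 2)), {a10}] := by
          funext x
          fin_cases x <;> simp [Function.update]
        rw [hupd]
  · have hprof : profileInput ![({a00} : Finset (Edge 2 2)), {a10}] = {a00, a10} := by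
      decide
    rw [hprof, runA hε hc, weight_singleton_a00]
  · refine ⟨{a01, a10}, ⟨⟨by decide, by decide, by decide⟩, ?_⟩, weight_pair_BC⟩
    intro ν hν
    have hq : ∀ j : Fin 2, 0 < (![1+ε, 1] : Fin 2 → ℝ) j := by
      intro j
      fin_cases j <;> simp <;> linarith
    rw [weight_eq_sum_mt _ hν, weight_pair_BC]
    calc ∑ t ∈ mt ν, (![1+ε, 1] : Fin 2 → ℝ) t
        ≤ ∑ t : Fin 2, (![1+ε, 1] : Fin 2 → ℝ) t :=
          Finset.sum_le_sum_of_subset_of_nonneg (Finset.subset_univ _)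
            (fun t _ _ => (hq t).le)
      _ = 2 + ε := by
          rw [Fin.sum_univ_two]
          simp only [Matrix.cons_val_zero, Matrix.cons_val_one, Matrix.head_cons]
          ring

end PoA

/-- Both `M_BFS` and `M_DFS` have Price of Anarchy exactly 2 in the
edge-reporting game: every pure Nash equilibrium yields at least half of the optimal social
welfare; and for every `ε > 0`, on the instance with two agents of capacity 1, tasks of
values `1+ε` and `1`, and true edges `{(a₁,t₁),(a₁,t₂),(a₂,t₁)}`, there is a pure Nash
equilibrium of welfare `1+ε` while the optimum is `2+ε`. -/
theorem PoA_of_MBFS_MDFS_is_two :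
    (∀ (n m : ℕ) (b : Fin n → ℕ) (q : Fin m → ℝ), (∀ j, 0 < q j) →
      ∀ (E : Finset (Edge n m)) (D : Fin n → Finset (Edge n m)),
        IsNE (MBFS b q) q E D → ∀ μ, IsMaxMatching b q E μ →
          weight q μ ≤ 2 * weight q (MBFS b q (profileInput D))) ∧
    (∀ (n m : ℕ) (b : Fin n → ℕ) (q : Fin m → ℝ), (∀ j, 0 < q j) →
      ∀ (E : Finset (Edge n m)) (D : Fin n → Finset (Edge n m)),
        IsNE (MDFS b q) q E D → ∀ μ, IsMaxMatching b q E μ →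
          weight q μ ≤ 2 * weight q (MDFS b q (profileInput D))) ∧
    (∀ ε : ℝ, 0 < ε →
      ∃ D : Fin 2 → Finset (Edge 2 2),
        IsNE (MBFS (fun _ => 1) ![1 + ε, 1]) ![1 + ε, 1]
          ({(0,0),(0,1),(1,0)} : Finset (Edge 2 2)) D ∧
        weight ![1 + ε, 1] (MBFS (fun _ => 1) ![1 + ε, 1] (profileInput D)) = 1 + ε ∧
        ∃ μ, IsMaxMatching (fun _ => 1) ![1 + ε, 1]
            ({(0,0),(0,1),(1,0)} : Finset (Edge 2 2)) μ ∧
          weight ![1 + ε, 1] μ = 2 + ε) ∧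
    (∀ ε : ℝ, 0 < ε →
      ∃ D : Fin 2 → Finset (Edge 2 2),
        IsNE (MDFS (fun _ => 1) ![1 + ε, 1]) ![1 + ε, 1]
          ({(0,0),(0,1),(1,0)} : Finset (Edge 2 2)) D ∧
        weight ![1 + ε, 1] (MDFS (fun _ => 1) ![1 + ε, 1] (profileInput D)) = 1 + ε ∧
        ∃ μ, IsMaxMatching (fun _ => 1) ![1 + ε, 1]
            ({(0,0),(0,1),(1,0)} : Finset (Edge 2 2)) μ ∧
          weight ![1 + ε, 1] μ = 2 + ε) := by
  refine ⟨?_, ?_, ?_, ?_⟩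
  · intro n m b q hq E D hNE μ hμ
    exact PoA.poa_upper (bfsCost n m) b q hq E D hNE μ hμ
  · intro n m b q hq E D hNE μ hμ
    exact PoA.poa_upper (dfsCost n m) b q hq E D hNE μ hμ
  · intro ε hε
    exact PoA.concrete_part (bfsCost 2 2) (by decide) ε hε
  · intro ε hε
    exact PoA.concrete_part (dfsCost 2 2) (by decide) ε hε
end

section
/- The greedy mechanism M_AP is truthful against joint edge-and-capacity manipulation: if an agent with true capacity b_i and true edge set T_i reports any capacity b'_i ≤ b_i and any nonempty edge subset T'_i ⊆ T_i, its resulting utility is at most its utility when reporting (T_i, b_i). In particular, the set of tasks assigned to an agent reporting capacity b'_i < b_i is a subset of the tasks it receives reporting b_i (holding its edge report and the other agents fixed). -/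
open Classical

variable {n m : ℕ}

-- helpers
private lemma degP_mono {μ ν : Finset (Edge n m)} (h : μ ⊆ ν) (k : Fin n) :
    deg μ k ≤ deg ν k :=
  Finset.card_le_card (Finset.filter_subset_filter _ h)

private lemma filterI_insert_self {μ : Finset (Edge n m)} {i : Fin n} {j : Fin m} :
    (insert (i, j) μ).filter (fun e => e.1 = i)
      = insert (i, j) (μ.filter (fun e => e.1 = i)) := by
  rw [Finset.filter_insert, if_pos rfl]

private lemma filterI_insert_ne {μ : Finset (Edge n m)} {k i : Fin n} {j : Fin m} (h : k ≠ i) :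
    (insert (k, j) μ).filter (fun e => e.1 = i) = μ.filter (fun e => e.1 = i) := by
  rw [Finset.filter_insert, if_neg (by simpa using h)]

private lemma deg_insert_fst {μ : Finset (Edge n m)} {k : Fin n} {j : Fin m}
    (h : (k, j) ∉ μ) : deg (insert (k, j) μ) k = deg μ k + 1 := by
  unfold deg
  rw [filterI_insert_self,
    Finset.card_insert_of_notMem (fun hc => h (Finset.mem_filter.1 hc).1)]

private lemma deg_insert_ne {μ : Finset (Edge n m)} {k k' : Fin n} {j : Fin m}
    (h : k ≠ k') : deg (insert (k, j) μ) k' = deg μ k' := by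
  unfold deg; rw [filterI_insert_ne h]

private lemma deg_insert_le (μ : Finset (Edge n m)) (e : Edge n m) (k : Fin n) :
    deg (insert e μ) k ≤ deg μ k + 1 := by
  unfold deg
  rw [Finset.filter_insert]
  split
  · exact Finset.card_insert_le _ _
  · exact Nat.le_succ_of_le le_rfl

private lemma util_insert_self {q : Fin m → ℝ} {μ : Finset (Edge n m)} {i : Fin n} {j : Fin m}
    (h : (i, j) ∉ μ) : util q i (insert (i, j) μ) = q j + util q i μ := by
  unfold util
  rw [filterI_insert_self, Finset.sum_insert (fun hc => h (Finset.mem_filter.1 hc).1)]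

private lemma util_insert_ne {q : Fin m → ℝ} {μ : Finset (Edge n m)} {k i : Fin n} {j : Fin m}
    (h : k ≠ i) : util q i (insert (k, j) μ) = util q i μ := by
  unfold util; rw [filterI_insert_ne h]

-- find? on finRange
private lemma find?_lt_min {p : Fin n → Bool} :
    ∀ {l : List (Fin n)}, l.Pairwise (· < ·) → ∀ {k}, l.find? p = some k →
      ∀ j ∈ l, j < k → p j = false := by
  intro l
  induction l with
  | nil => intro _ k h; simp at h
  | cons a t ih =>
    intro hpw k h j hj hjk
    cases hpa : p a with
    | true =>
      rw [List.find?_cons_of_pos hpa] at h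
      cases h
      rcases List.mem_cons.1 hj with rfl | hjt
      · exact absurd hjk (lt_irrefl _)
      · exact absurd hjk (not_lt.2 (le_of_lt ((List.pairwise_cons.1 hpw).1 _ hjt)))
    | false =>
      rcases List.mem_cons.1 hj with rfl | hjt
      · exact hpa
      · rw [List.find?_cons_of_neg (by simp [hpa])] at h
        exact ih hpw.of_cons h j hjt hjk

private lemma find?_eq_some_of_min {p : Fin n → Bool} :
    ∀ {l : List (Fin n)}, l.Pairwise (· < ·) → ∀ {k}, k ∈ l → p k = true →
      (∀ j, j < k → p j = false) → l.find? p = some k := by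
  intro l
  induction l with
  | nil => intro _ k hk; cases hk
  | cons a t ih =>
    intro hpw k hk hpk hmin
    rcases List.mem_cons.1 hk with rfl | hkt
    · rw [List.find?_cons_of_pos hpk]
    · have hak : a < k := (List.pairwise_cons.1 hpw).1 _ hkt
      rw [List.find?_cons_of_neg (by simp [hmin a hak])]
      exact ih hpw.of_cons hkt hpk hmin

private lemma findAgent_eq_some {P : Fin n → Prop} [DecidablePred P] {k : Fin n} :
    (List.finRange n).find? (fun i => decide (P i)) = some k ↔ P k ∧ ∀ j, j < k → ¬ P j := by
  constructor
  · intro h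
    have h1 := List.find?_some h
    refine ⟨of_decide_eq_true (by simpa using h1), fun j hj hPj => ?_⟩
    have := find?_lt_min (List.pairwise_lt_finRange n) h j (List.mem_finRange j) hj
    simp [hPj] at this
  · rintro ⟨h1, h2⟩
    exact find?_eq_some_of_min (List.pairwise_lt_finRange n) (List.mem_finRange k)
      (decide_eq_true h1) (fun j hj => decide_eq_false (h2 j hj))

private lemma findAgent_eq_none {P : Fin n → Prop} [DecidablePred P] :
    (List.finRange n).find? (fun i => decide (P i)) = none ↔ ∀ k, ¬ P k := by
  rw [List.find?_eq_none]
  constructor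
  · intro h k hP
    have := h k (List.mem_finRange k)
    simp at this
    exact this hP
  · intro h k _; simpa using h k

-- the step function
noncomputable def gstep (b : Fin n → ℕ) (E' : Finset (Edge n m))
    (μ : Finset (Edge n m)) (j : Fin m) : Finset (Edge n m) :=
  match (List.finRange n).find? (fun i => decide ((i, j) ∈ E' ∧ deg μ i < b i)) with
  | some i => insert (i, j) μ
  | none => μ

lemma MAP_eq_foldl (b : Fin n → ℕ) (q : Fin m → ℝ) (E' : Finset (Edge n m)) :
    MAP b q E' = (sortedTasks m q).foldl (gstep b E') ∅ := rfl

private lemma gstep_some {b : Fin n → ℕ} {E' μ : Finset (Edge n m)} {j : Fin m} {k : Fin n}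
    (h : (List.finRange n).find? (fun i => decide ((i, j) ∈ E' ∧ deg μ i < b i)) = some k) :
    gstep b E' μ j = insert (k, j) μ := by
  unfold gstep; rw [h]

private lemma gstep_none {b : Fin n → ℕ} {E' μ : Finset (Edge n m)} {j : Fin m}
    (h : (List.finRange n).find? (fun i => decide ((i, j) ∈ E' ∧ deg μ i < b i)) = none) :
    gstep b E' μ j = μ := by
  unfold gstep; rw [h]

private lemma subset_gstep (b : Fin n → ℕ) (E' μ : Finset (Edge n m)) (j : Fin m) :
    μ ⊆ gstep b E' μ j := by
  unfold gstep
  split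
  · exact Finset.subset_insert _ _
  · exact Finset.Subset.refl μ

private lemma deg_gstep_le {b : Fin n → ℕ} {E' : Finset (Edge n m)} (μ : Finset (Edge n m))
    (j : Fin m) (hμ : ∀ k, deg μ k ≤ b k) : ∀ k, deg (gstep b E' μ j) k ≤ b k := by
  intro k
  unfold gstep
  split
  · next k' hk' =>
    have hp := (findAgent_eq_some.1 hk').1.2
    by_cases h : k' = k
    · rw [h] at hp
      rw [h]
      exact le_trans (deg_insert_le μ _ k) hp
    · rw [deg_insert_ne h]; exact hμ k
  · exact hμ k

private lemma cap_step (b : Fin n → ℕ) (b' : ℕ) (i : Fin n) (hb' : b' ≤ b i)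
    (E' : Finset (Edge n m)) (j : Fin m) (μ ν : Finset (Edge n m))
    (hdb : deg ν i ≤ b')
    (hor : μ = ν ∨ deg ν i = b' ∧
      ν.filter (fun e => e.1 = i) ⊆ μ.filter (fun e => e.1 = i)) :
    deg (gstep (Function.update b i b') E' ν j) i ≤ b' ∧
    (gstep b E' μ j = gstep (Function.update b i b') E' ν j ∨
      deg (gstep (Function.update b i b') E' ν j) i = b' ∧
      (gstep (Function.update b i b') E' ν j).filter (fun e => e.1 = i) ⊆
        (gstep b E' μ j).filter (fun e => e.1 = i)) := by
  have hupi : Function.update b i b' i = b' := Function.update_self i b' b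
  have hupne : ∀ k, k ≠ i → Function.update b i b' k = b k :=
    fun k hk => Function.update_of_ne hk b' b
  -- the degree bound, in all cases
  have hdeg' : deg (gstep (Function.update b i b') E' ν j) i ≤ b' := by
    unfold gstep
    split
    · next k hk =>
      have hp := (findAgent_eq_some.1 hk).1.2
      by_cases h : k = i
      · subst h
        rw [hupi] at hp
        exact le_trans (deg_insert_le ν _ k) hp
      · rw [deg_insert_ne h]; exact hdb
    · exact hdb
  refine ⟨hdeg', ?_⟩
  rcases hor with rfl | ⟨hdeq, hsub⟩
  · -- states equal
    by_cases hmono : (i, j) ∈ E' ∧ deg μ i < b i → deg μ i < b'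
    · -- predicates coincide, runs stay equal
      have hiff : ∀ k, ((k, j) ∈ E' ∧ deg μ k < Function.update b i b' k) ↔
          ((k, j) ∈ E' ∧ deg μ k < b k) := by
        intro k
        by_cases h : k = i
        · subst h
          rw [hupi]
          constructor
          · rintro ⟨h1, h2⟩; exact ⟨h1, lt_of_lt_of_le h2 hb'⟩
          · rintro ⟨h1, h2⟩; exact ⟨h1, hmono ⟨h1, h2⟩⟩
        · rw [hupne k h]
      left
      cases hoA : (List.finRange n).find? (fun k => decide ((k, j) ∈ E' ∧ deg μ k < b k)) with
      | none =>
        have hoB : (List.finRange n).find?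
            (fun k => decide ((k, j) ∈ E' ∧ deg μ k < Function.update b i b' k)) = none :=
          findAgent_eq_none.2 (fun k hk => (findAgent_eq_none.1 hoA k) ((hiff k).1 hk))
        rw [gstep_none hoA, gstep_none hoB]
      | some k =>
        obtain ⟨hpk, hmin⟩ := findAgent_eq_some.1 hoA
        have hoB : (List.finRange n).find?
            (fun k => decide ((k, j) ∈ E' ∧ deg μ k < Function.update b i b' k)) = some k :=
          findAgent_eq_some.2 ⟨(hiff k).2 hpk, fun k' hk' hP => hmin k' hk' ((hiff k').1 hP)⟩
        rw [gstep_some hoA, gstep_some hoB]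
    · -- i is available for A but not B : deg μ i = b'
      push_neg at hmono
      have hgei : b' ≤ deg μ i := hmono.2
      have hdi : deg μ i = b' := le_antisymm hdb hgei
      have hnBi : ¬((i, j) ∈ E' ∧ deg μ i < Function.update b i b' i) := by
        rw [hupi]; rintro ⟨-, h⟩; exact absurd hdi (ne_of_lt h)
      have hiffne : ∀ k, k ≠ i → (((k, j) ∈ E' ∧ deg μ k < Function.update b i b' k) ↔
          ((k, j) ∈ E' ∧ deg μ k < b k)) := fun k hk => by rw [hupne k hk]
      cases hoA : (List.finRange n).find? (fun k => decide ((k, j) ∈ E' ∧ deg μ k < b k)) with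
      | none =>
        left
        have hoB : (List.finRange n).find?
            (fun k => decide ((k, j) ∈ E' ∧ deg μ k < Function.update b i b' k)) = none := by
          refine findAgent_eq_none.2 (fun k hk => ?_)
          by_cases h : k = i
          · subst h; exact hnBi hk
          · exact (findAgent_eq_none.1 hoA k) ((hiffne k h).1 hk)
        rw [gstep_none hoA, gstep_none hoB]
      | some k =>
        obtain ⟨hpk, hmin⟩ := findAgent_eq_some.1 hoA
        by_cases hk : k = i
        · -- A inserts (i, j), B does something not at i
          rw [hk] at hoA
          right
          rw [gstep_some hoA]
          have hfi : (gstep (Function.update b i b') E' μ j).filter (fun e => e.1 = i)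
              = μ.filter (fun e => e.1 = i) := by
            unfold gstep
            split
            · next k' hk' =>
              have hp := (findAgent_eq_some.1 hk').1
              have hne : k' ≠ i := fun h => hnBi (h ▸ hp)
              exact filterI_insert_ne hne
            · rfl
          have hdeg2 : deg (gstep (Function.update b i b') E' μ j) i = b' := by
            unfold deg; rw [hfi]; exact hdi
          refine ⟨hdeg2, ?_⟩
          rw [hfi]
          exact Finset.filter_subset_filter _ (Finset.subset_insert _ _)
        · -- k ≠ i : B also picks k
          left
          have hoB : (List.finRange n).find?
              (fun k' => decide ((k', j) ∈ E' ∧ deg μ k' < Function.update b i b' k')) = some k := by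
            refine findAgent_eq_some.2 ⟨(hiffne k hk).2 hpk, fun k' hk' hP => ?_⟩
            by_cases h : k' = i
            · subst h; exact hnBi hP
            · exact hmin k' hk' ((hiffne k' h).1 hP)
          rw [gstep_some hoA, gstep_some hoB]
  · -- diverged: i saturated in B
    right
    have hnBi : ¬((i, j) ∈ E' ∧ deg ν i < Function.update b i b' i) := by
      rw [hupi]; rintro ⟨-, h⟩; exact absurd hdeq (ne_of_lt h)
    have hfi : (gstep (Function.update b i b') E' ν j).filter (fun e => e.1 = i)
        = ν.filter (fun e => e.1 = i) := by
      unfold gstep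
      split
      · next k hk =>
        have hp := (findAgent_eq_some.1 hk).1
        have : k ≠ i := fun h => hnBi (h ▸ hp)
        exact filterI_insert_ne this
      · rfl
    have hdeg2 : deg (gstep (Function.update b i b') E' ν j) i = b' := by
      unfold deg; rw [hfi]; exact hdeq
    refine ⟨hdeg2, ?_⟩
    rw [hfi]
    exact hsub.trans (Finset.filter_subset_filter _ (subset_gstep b E' μ j))

private lemma cap_fold (b : Fin n → ℕ) (b' : ℕ) (i : Fin n) (hb' : b' ≤ b i)
    (E' : Finset (Edge n m)) :
    ∀ (l : List (Fin m)) (μ ν : Finset (Edge n m)),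
      deg ν i ≤ b' →
      (μ = ν ∨ deg ν i = b' ∧
        ν.filter (fun e => e.1 = i) ⊆ μ.filter (fun e => e.1 = i)) →
      deg (l.foldl (gstep (Function.update b i b') E') ν) i ≤ b' ∧
      (l.foldl (gstep b E') μ = l.foldl (gstep (Function.update b i b') E') ν ∨
        deg (l.foldl (gstep (Function.update b i b') E') ν) i = b' ∧
        (l.foldl (gstep (Function.update b i b') E') ν).filter (fun e => e.1 = i) ⊆
          (l.foldl (gstep b E') μ).filter (fun e => e.1 = i))
  | [], μ, ν, h1, h2 => ⟨h1, h2⟩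
  | j :: l, μ, ν, h1, h2 => by
    obtain ⟨g1, g2⟩ := cap_step b b' i hb' E' j μ ν h1 h2
    simpa using cap_fold b b' i hb' E' l _ _ g1 g2

private lemma cap_subset (b : Fin n → ℕ) (q : Fin m → ℝ) (b' : ℕ) (i : Fin n) (hb' : b' ≤ b i)
    (E' : Finset (Edge n m)) :
    (MAP (Function.update b i b') q E').filter (fun e => e.1 = i) ⊆
      (MAP b q E').filter (fun e => e.1 = i) := by
  rw [MAP_eq_foldl, MAP_eq_foldl]
  obtain ⟨-, h⟩ := cap_fold b b' i hb' E' (sortedTasks m q) ∅ ∅ (by simp [deg]) (Or.inl rfl)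
  rcases h with h | ⟨-, h⟩
  · rw [h]
  · exact h

private def InvE (b : Fin n → ℕ) (q : Fin m → ℝ) (i : Fin n) (l : List (Fin m))
    (μ ν : Finset (Edge n m)) : Prop :=
  (∀ e ∈ μ, ∀ j ∈ l, q j ≤ q e.2 ∧ e.2 ≠ j) ∧
  (∀ e ∈ ν, ∀ j ∈ l, q j ≤ q e.2 ∧ e.2 ≠ j) ∧
  (∀ k, deg μ k ≤ b k) ∧
  (∀ k, deg ν k ≤ b k) ∧
  (deg μ i = b i ∨
    ((∀ k, k < i → deg μ k = deg ν k) ∧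
      ν.filter (fun e => e.1 = i) ⊆ μ.filter (fun e => e.1 = i) ∧
      ∀ k, i < k → deg μ k ≤ deg ν k)) ∧
  (∃ A, A ⊆ μ.filter (fun e => e.1 = i) ∧ A.card = (ν.filter (fun e => e.1 = i)).card ∧
    util q i ν ≤ ∑ e ∈ A, q e.2)

private lemma edge_step (b : Fin n → ℕ) (q : Fin m → ℝ) (i : Fin n)
    (E E' : Finset (Edge n m))
    (hE1 : ∀ j : Fin m, (i, j) ∈ E' → (i, j) ∈ E)
    (hE2 : ∀ (k : Fin n) (j : Fin m), k ≠ i → ((k, j) ∈ E' ↔ (k, j) ∈ E))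
    (j : Fin m) (l : List (Fin m))
    (hqj : ∀ j' ∈ l, q j' ≤ q j) (hjl : j ∉ l)
    (μ ν : Finset (Edge n m)) (h : InvE b q i (j :: l) μ ν) :
    InvE b q i l (gstep b E μ j) (gstep b E' ν j) := by
  obtain ⟨ha1, ha2, hb1, hb2, hc, A, hAsub, hAcard, hAsum⟩ := h
  have freshμ : ∀ k : Fin n, (k, j) ∉ μ :=
    fun k hk => (ha1 _ hk j List.mem_cons_self).2 rfl
  have freshν : ∀ k : Fin n, (k, j) ∉ ν :=
    fun k hk => (ha2 _ hk j List.mem_cons_self).2 rfl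
  have haNew : ∀ (μ₀ : Finset (Edge n m)),
      (∀ e ∈ μ₀, ∀ j' ∈ j :: l, q j' ≤ q e.2 ∧ e.2 ≠ j') →
      ∀ (k : Fin n), ∀ e ∈ insert (k, j) μ₀, ∀ j' ∈ l, q j' ≤ q e.2 ∧ e.2 ≠ j' := by
    intro μ₀ h₀ k e he j' hj'
    rcases Finset.mem_insert.1 he with rfl | he'
    · exact ⟨hqj j' hj', fun hjj => hjl (by rw [show j = j' from hjj]; exact hj')⟩
    · exact h₀ e he' j' (List.mem_cons_of_mem _ hj')
  have haOld : ∀ (μ₀ : Finset (Edge n m)),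
      (∀ e ∈ μ₀, ∀ j' ∈ j :: l, q j' ≤ q e.2 ∧ e.2 ≠ j') →
      ∀ e ∈ μ₀, ∀ j' ∈ l, q j' ≤ q e.2 ∧ e.2 ≠ j' :=
    fun μ₀ h₀ e he j' hj' => h₀ e he j' (List.mem_cons_of_mem _ hj')
  have haStepμ : ∀ e ∈ gstep b E μ j, ∀ j' ∈ l, q j' ≤ q e.2 ∧ e.2 ≠ j' := by
    unfold gstep; split
    · next k _ => exact haNew μ ha1 k
    · exact haOld μ ha1
  have haStepν : ∀ e ∈ gstep b E' ν j, ∀ j' ∈ l, q j' ≤ q e.2 ∧ e.2 ≠ j' := by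
    unfold gstep; split
    · next k _ => exact haNew ν ha2 k
    · exact haOld ν ha2
  have hbStepμ := deg_gstep_le (b := b) (E' := E) μ j hb1
  have hbStepν := deg_gstep_le (b := b) (E' := E') ν j hb2
  refine ⟨haStepμ, haStepν, hbStepμ, hbStepν, ?_⟩
  by_cases hfull : deg μ i = b i
  · -- phase 2 : i already saturated in the truthful run
    have hcL : deg (gstep b E μ j) i = b i :=
      le_antisymm (hbStepμ i) (hfull ▸ degP_mono (subset_gstep b E μ j) i)
    refine ⟨Or.inl hcL, ?_⟩
    have hmono : μ.filter (fun e => e.1 = i) ⊆ (gstep b E μ j).filter (fun e => e.1 = i) :=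
      Finset.filter_subset_filter _ (subset_gstep b E μ j)
    cases hoB : (List.finRange n).find? (fun k => decide ((k, j) ∈ E' ∧ deg ν k < b k)) with
    | none =>
      rw [gstep_none hoB]
      exact ⟨A, hAsub.trans hmono, hAcard, hAsum⟩
    | some k =>
      rw [gstep_some hoB]
      by_cases hk : k = i
      · rw [hk] at hoB ⊢
        obtain ⟨⟨hEij, hdlt⟩, -⟩ := findAgent_eq_some.1 hoB
        have hcard : A.card < (μ.filter (fun e => e.1 = i)).card := by
          rw [hAcard]
          calc (ν.filter (fun e => e.1 = i)).card = deg ν i := rfl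
            _ < b i := hdlt
            _ = deg μ i := hfull.symm
        have hnsub : ¬ μ.filter (fun e => e.1 = i) ⊆ A :=
          fun hs => absurd (Finset.card_le_card hs) (not_le.2 hcard)
        obtain ⟨e', he'⟩ := Finset.sdiff_nonempty.2 hnsub
        obtain ⟨he'μ, he'A⟩ := Finset.mem_sdiff.1 he'
        refine ⟨insert e' A, ?_, ?_, ?_⟩
        · exact Finset.insert_subset_iff.2 ⟨hmono he'μ, hAsub.trans hmono⟩
        · rw [Finset.card_insert_of_notMem he'A, filterI_insert_self,
            Finset.card_insert_of_notMem (fun hc => freshν i (Finset.mem_filter.1 hc).1), hAcard]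
        · rw [util_insert_self (freshν i), Finset.sum_insert he'A]
          exact add_le_add (ha1 e' (Finset.mem_filter.1 he'μ).1 j List.mem_cons_self).1 hAsum
      · rw [filterI_insert_ne hk, util_insert_ne hk]
        exact ⟨A, hAsub.trans hmono, hAcard, hAsum⟩
  · -- phase 1
    have hlt : deg μ i < b i := lt_of_le_of_ne (hb1 i) hfull
    obtain ⟨hdeq, hsub, hge⟩ := hc.resolve_left hfull
    cases hoA : (List.finRange n).find? (fun k => decide ((k, j) ∈ E ∧ deg μ k < b k)) with
    | none =>
      have hallA := findAgent_eq_none.1 hoA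
      have hoB : (List.finRange n).find?
          (fun k => decide ((k, j) ∈ E' ∧ deg ν k < b k)) = none := by
        refine findAgent_eq_none.2 (fun k hk => ?_)
        rcases lt_trichotomy k i with h | h | h
        · exact hallA k ⟨(hE2 k j (ne_of_lt h)).1 hk.1, (hdeq k h) ▸ hk.2⟩
        · rw [h] at hk
          exact hallA i ⟨hE1 j hk.1, hlt⟩
        · exact hallA k ⟨(hE2 k j (ne_of_gt h)).1 hk.1, lt_of_le_of_lt (hge k h) hk.2⟩
      rw [gstep_none hoA, gstep_none hoB]
      exact ⟨Or.inr ⟨hdeq, hsub, hge⟩, A, hAsub, hAcard, hAsum⟩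
    | some k =>
      obtain ⟨hpAk, hminA⟩ := findAgent_eq_some.1 hoA
      rw [gstep_some hoA]
      rcases lt_trichotomy k i with hki | hki | hki
      · -- k < i : the deviated run picks the same agent
        have hkne : k ≠ i := ne_of_lt hki
        have hoB : (List.finRange n).find?
            (fun k' => decide ((k', j) ∈ E' ∧ deg ν k' < b k')) = some k := by
          refine findAgent_eq_some.2
            ⟨⟨(hE2 k j hkne).2 hpAk.1, (hdeq k hki) ▸ hpAk.2⟩, ?_⟩
          intro k' hk' hP
          exact hminA k' hk'
            ⟨(hE2 k' j (ne_of_lt (hk'.trans hki))).1 hP.1, (hdeq k' (hk'.trans hki)) ▸ hP.2⟩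
        rw [gstep_some hoB]
        constructor
        · refine Or.inr ⟨?_, ?_, ?_⟩
          · intro k' hk'
            by_cases h4 : k = k'
            · rw [← h4, deg_insert_fst (freshμ k), deg_insert_fst (freshν k), hdeq k hki]
            · rw [deg_insert_ne h4, deg_insert_ne h4]; exact hdeq k' hk'
          · rw [filterI_insert_ne hkne, filterI_insert_ne hkne]; exact hsub
          · intro k' hk'
            have h4 : k ≠ k' := fun hh => absurd (hh ▸ hki) (not_lt.2 (le_of_lt hk'))
            rw [deg_insert_ne h4, deg_insert_ne h4]; exact hge k' hk'
        · rw [filterI_insert_ne hkne, filterI_insert_ne hkne, util_insert_ne hkne]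
          exact ⟨A, hAsub, hAcard, hAsum⟩
      · -- k = i : the truthful run gives j to agent i
        rw [hki] at hpAk hminA ⊢
        have hminB : ∀ k', k' < i → ¬((k', j) ∈ E' ∧ deg ν k' < b k') := by
          intro k' hk' hP
          exact hminA k' hk' ⟨(hE2 k' j (ne_of_lt hk')).1 hP.1, (hdeq k' hk') ▸ hP.2⟩
        cases hoB : (List.finRange n).find?
            (fun k' => decide ((k', j) ∈ E' ∧ deg ν k' < b k')) with
        | none =>
          rw [gstep_none hoB]
          constructor
          · by_cases h2 : deg (insert (i, j) μ) i = b i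
            · exact Or.inl h2
            · refine Or.inr ⟨?_, ?_, ?_⟩
              · intro k' hk'; rw [deg_insert_ne (ne_of_lt hk').symm]; exact hdeq k' hk'
              · exact hsub.trans (Finset.filter_subset_filter _ (Finset.subset_insert _ _))
              · intro k' hk'; rw [deg_insert_ne (ne_of_lt hk')]; exact hge k' hk'
          · exact ⟨A, hAsub.trans (Finset.filter_subset_filter _ (Finset.subset_insert _ _)),
              hAcard, hAsum⟩
        | some k'' =>
          obtain ⟨hpBk'', hminB'⟩ := findAgent_eq_some.1 hoB
          rw [gstep_some hoB]
          rcases lt_trichotomy k'' i with h2 | h2 | h2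
          · exact absurd hpBk'' (hminB k'' h2)
          · -- both runs give j to i
            rw [h2] at hpBk'' ⊢
            constructor
            · by_cases hfull2 : deg (insert (i, j) μ) i = b i
              · exact Or.inl hfull2
              · refine Or.inr ⟨?_, ?_, ?_⟩
                · intro k' hk'
                  rw [deg_insert_ne (ne_of_lt hk').symm, deg_insert_ne (ne_of_lt hk').symm]
                  exact hdeq k' hk'
                · rw [filterI_insert_self, filterI_insert_self]
                  exact Finset.insert_subset_insert _ hsub
                · intro k' hk'
                  rw [deg_insert_ne (ne_of_lt hk'), deg_insert_ne (ne_of_lt hk')]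
                  exact hge k' hk'
            · refine ⟨insert (i, j) A, ?_, ?_, ?_⟩
              · rw [filterI_insert_self]
                exact Finset.insert_subset_insert _ hAsub
              · rw [Finset.card_insert_of_notMem
                    (fun hc => freshμ i (Finset.mem_filter.1 (hAsub hc)).1),
                  filterI_insert_self,
                  Finset.card_insert_of_notMem (fun hc => freshν i (Finset.mem_filter.1 hc).1),
                  hAcard]
              · rw [util_insert_self (freshν i), Finset.sum_insert
                    (fun hc => freshμ i (Finset.mem_filter.1 (hAsub hc)).1)]
                exact add_le_add le_rfl hAsum
          · -- deviated run gives j to some k'' > i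
            have hk''ni : k'' ≠ i := ne_of_gt h2
            constructor
            · by_cases hfull2 : deg (insert (i, j) μ) i = b i
              · exact Or.inl hfull2
              · refine Or.inr ⟨?_, ?_, ?_⟩
                · intro k' hk'
                  rw [deg_insert_ne (ne_of_lt hk').symm,
                    deg_insert_ne (ne_of_lt (hk'.trans h2)).symm]
                  exact hdeq k' hk'
                · rw [filterI_insert_ne hk''ni]
                  exact hsub.trans (Finset.filter_subset_filter _ (Finset.subset_insert _ _))
                · intro k' hk'
                  rw [deg_insert_ne (ne_of_lt hk')]
                  exact le_trans (hge k' hk') (degP_mono (Finset.subset_insert _ _) k')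
            · refine ⟨A, hAsub.trans (Finset.filter_subset_filter _ (Finset.subset_insert _ _)),
                ?_, ?_⟩
              · rw [filterI_insert_ne hk''ni]; exact hAcard
              · rw [util_insert_ne hk''ni]; exact hAsum
      · -- i < k : the truthful run gives j to some k > i
        have hEk : (k, j) ∈ E' := (hE2 k j (ne_of_gt hki)).2 hpAk.1
        have hnBi : ¬((i, j) ∈ E' ∧ deg ν i < b i) := fun hP => hminA i hki ⟨hE1 j hP.1, hlt⟩
        have hminB : ∀ k', k' < k → ¬((k', j) ∈ E' ∧ deg ν k' < b k') := by
          intro k' hk' hP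
          rcases lt_trichotomy k' i with h3 | h3 | h3
          · exact hminA k' hk' ⟨(hE2 k' j (ne_of_lt h3)).1 hP.1, (hdeq k' h3) ▸ hP.2⟩
          · exact hnBi (h3 ▸ hP)
          · exact hminA k' hk' ⟨(hE2 k' j (ne_of_gt h3)).1 hP.1, lt_of_le_of_lt (hge k' h3) hP.2⟩
        have hkni : k ≠ i := ne_of_gt hki
        cases hoB : (List.finRange n).find?
            (fun k' => decide ((k', j) ∈ E' ∧ deg ν k' < b k')) with
        | none =>
          have hνk : b k ≤ deg ν k := not_lt.1 (fun h => (findAgent_eq_none.1 hoB k) ⟨hEk, h⟩)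
          rw [gstep_none hoB]
          constructor
          · refine Or.inr ⟨?_, ?_, ?_⟩
            · intro k' hk'
              rw [deg_insert_ne (ne_of_lt (hk'.trans hki)).symm]
              exact hdeq k' hk'
            · rw [filterI_insert_ne hkni]; exact hsub
            · intro k' hk'
              by_cases h4 : k = k'
              · rw [← h4, deg_insert_fst (freshμ k)]
                exact le_trans (Nat.succ_le_of_lt hpAk.2) hνk
              · rw [deg_insert_ne h4]; exact hge k' hk'
          · rw [filterI_insert_ne hkni]
            exact ⟨A, hAsub, hAcard, hAsum⟩
        | some k'' =>
          obtain ⟨hpBk'', hminB'⟩ := findAgent_eq_some.1 hoB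
          rw [gstep_some hoB]
          have hkk'' : k ≤ k'' := not_lt.1 (fun h => hminB k'' h hpBk'')
          have hik'' : i < k'' := lt_of_lt_of_le hki hkk''
          have hk''ni : k'' ≠ i := ne_of_gt hik''
          by_cases heq : k'' = k
          · rw [heq] at hpBk'' hminB' ⊢
            constructor
            · refine Or.inr ⟨?_, ?_, ?_⟩
              · intro k' hk'
                rw [deg_insert_ne (ne_of_lt (hk'.trans hki)).symm,
                  deg_insert_ne (ne_of_lt (hk'.trans hki)).symm]
                exact hdeq k' hk'
              · rw [filterI_insert_ne hkni, filterI_insert_ne hkni]; exact hsub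
              · intro k' hk'
                by_cases h4 : k = k'
                · rw [← h4, deg_insert_fst (freshμ k), deg_insert_fst (freshν k)]
                  exact Nat.succ_le_succ (hge k hki)
                · rw [deg_insert_ne h4, deg_insert_ne h4]; exact hge k' hk'
            · rw [filterI_insert_ne hkni, filterI_insert_ne hkni, util_insert_ne hkni]
              exact ⟨A, hAsub, hAcard, hAsum⟩
          · have hklt : k < k'' := lt_of_le_of_ne hkk'' (fun h => heq h.symm)
            have hνk : b k ≤ deg ν k := not_lt.1 (fun h => hminB' k hklt ⟨hEk, h⟩)
            constructor
            · refine Or.inr ⟨?_, ?_, ?_⟩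
              · intro k' hk'
                rw [deg_insert_ne (ne_of_lt (hk'.trans hki)).symm,
                  deg_insert_ne (ne_of_lt (hk'.trans hik'')).symm]
                exact hdeq k' hk'
              · rw [filterI_insert_ne hkni, filterI_insert_ne hk''ni]; exact hsub
              · intro k' hk'
                by_cases h4 : k = k'
                · rw [← h4, deg_insert_fst (freshμ k), deg_insert_ne heq]
                  exact le_trans (Nat.succ_le_of_lt hpAk.2) hνk
                · by_cases h5 : k'' = k'
                  · rw [deg_insert_ne h4, ← h5, deg_insert_fst (freshν k'')]
                    exact le_trans (hge k'' hik'') (Nat.le_succ _)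
                  · rw [deg_insert_ne h4, deg_insert_ne h5]; exact hge k' hk'
            · rw [filterI_insert_ne hkni, filterI_insert_ne hk''ni, util_insert_ne hk''ni]
              exact ⟨A, hAsub, hAcard, hAsum⟩

private lemma edge_fold (b : Fin n → ℕ) (q : Fin m → ℝ) (i : Fin n)
    (E E' : Finset (Edge n m))
    (hE1 : ∀ j : Fin m, (i, j) ∈ E' → (i, j) ∈ E)
    (hE2 : ∀ (k : Fin n) (j : Fin m), k ≠ i → ((k, j) ∈ E' ↔ (k, j) ∈ E)) :
    ∀ (l : List (Fin m)), l.Pairwise (fun a c => q c ≤ q a) → l.Nodup →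
    ∀ (μ ν : Finset (Edge n m)), InvE b q i l μ ν →
      InvE b q i [] (l.foldl (gstep b E) μ) (l.foldl (gstep b E') ν)
  | [], _, _, μ, ν, h => h
  | j :: l, hpw, hnd, μ, ν, h => by
    simp only [List.foldl_cons]
    exact edge_fold b q i E E' hE1 hE2 l hpw.of_cons (List.nodup_cons.1 hnd).2 _ _
      (edge_step b q i E E' hE1 hE2 j l
        (fun j' hj' => (List.pairwise_cons.1 hpw).1 j' hj') (List.nodup_cons.1 hnd).1 μ ν h)

private lemma sortedTasks_nodup (q : Fin m → ℝ) : (sortedTasks m q).Nodup :=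
  ((List.perm_insertionSort _ _).symm).nodup (List.nodup_finRange m)

private lemma sortedTasks_sorted (q : Fin m → ℝ) :
    (sortedTasks m q).Pairwise (fun a c => q c ≤ q a) := by
  haveI h1 : Std.Total (fun (a c : Fin m) => q c ≤ q a) := ⟨fun a b => le_total (q b) (q a)⟩
  haveI h2 : IsTrans (Fin m) (fun a c => q c ≤ q a) := ⟨fun a b c hab hbc => le_trans hbc hab⟩
  exact List.pairwise_insertionSort (fun a c => q c ≤ q a) _

private lemma edge_util (b : Fin n → ℕ) (q : Fin m → ℝ) (hq : ∀ j, 0 < q j) (i : Fin n)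
    (E E' : Finset (Edge n m))
    (hE1 : ∀ j : Fin m, (i, j) ∈ E' → (i, j) ∈ E)
    (hE2 : ∀ (k : Fin n) (j : Fin m), k ≠ i → ((k, j) ∈ E' ↔ (k, j) ∈ E)) :
    util q i (MAP b q E') ≤ util q i (MAP b q E) := by
  rw [MAP_eq_foldl, MAP_eq_foldl]
  have hbase : InvE b q i (sortedTasks m q) ∅ ∅ := by
    refine ⟨?_, ?_, ?_, ?_,
      Or.inr ⟨fun _ _ => rfl, Finset.Subset.refl _, fun _ _ => le_rfl⟩, ∅, ?_, ?_, ?_⟩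
    · intro e he; exact absurd he (Finset.notMem_empty e)
    · intro e he; exact absurd he (Finset.notMem_empty e)
    · intro k; simp [deg]
    · intro k; simp [deg]
    · exact Finset.empty_subset _
    · simp
    · simp [util]
  obtain ⟨-, -, -, -, -, A, hA1, -, hA3⟩ :=
    edge_fold b q i E E' hE1 hE2 (sortedTasks m q) (sortedTasks_sorted q)
      (sortedTasks_nodup q) ∅ ∅ hbase
  refine le_trans hA3 ?_
  exact Finset.sum_le_sum_of_subset_of_nonneg hA1 (fun e _ _ => (hq e.2).le)

/-- The greedy mechanism `M_AP` is truthful against joint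
edge-and-capacity manipulation: if an agent with true capacity `b i` and true edges
`agentEdges E i` reports any capacity `b' ≤ b i` (with `b' ≥ 1`) and any nonempty edge
subset, its utility is at most the utility of reporting `(agentEdges E i, b i)`.
Moreover, holding the edge report and the other agents fixed, the set of tasks assigned to
the agent when it reports capacity `b'` is a subset of those it receives reporting `b i`. -/
theorem MAP_truthful_edge_and_capacity (n m : ℕ) (b : Fin n → ℕ) (q : Fin m → ℝ)
    (hq : ∀ j, 0 < q j) (E : Finset (Edge n m)) (i : Fin n)
    (b' : ℕ) (hb'1 : 1 ≤ b') (hb' : b' ≤ b i)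
    (S : Finset (Edge n m)) (hS : ValidReport E i S) :
    util q i (MAP (Function.update b i b') q (deviate E i S)) ≤ util q i (MAP b q E) ∧
    (MAP (Function.update b i b') q (deviate E i S)).filter (fun e => e.1 = i) ⊆
      (MAP b q (deviate E i S)).filter (fun e => e.1 = i) := by
  obtain ⟨hS1, hS2⟩ := hS
  have hSE : ∀ e ∈ S, e.1 = i ∧ e ∈ E := by
    intro e he
    have h := hS1 he
    unfold agentEdges at h
    exact ⟨(Finset.mem_filter.1 h).2, (Finset.mem_filter.1 h).1⟩
  have hE1 : ∀ j : Fin m, (i, j) ∈ deviate E i S → (i, j) ∈ E := by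
    intro j hj
    unfold deviate at hj
    rcases Finset.mem_union.1 hj with h | h
    · exact (Finset.mem_filter.1 h).1
    · exact (hSE _ h).2
  have hE2 : ∀ (k : Fin n) (j : Fin m), k ≠ i → ((k, j) ∈ deviate E i S ↔ (k, j) ∈ E) := by
    intro k j hk
    unfold deviate
    constructor
    · intro h
      rcases Finset.mem_union.1 h with h | h
      · exact (Finset.mem_filter.1 h).1
      · exact absurd (hSE _ h).1 hk
    · intro h
      exact Finset.mem_union_left _ (Finset.mem_filter.2 ⟨h, hk⟩)
  constructor
  · have h1 : util q i (MAP (Function.update b i b') q (deviate E i S)) ≤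
        util q i (MAP b q (deviate E i S)) := by
      have hsub := cap_subset b q b' i hb' (deviate E i S)
      unfold util
      exact Finset.sum_le_sum_of_subset_of_nonneg hsub (fun e _ _ => (hq e.2).le)
    exact le_trans h1 (edge_util b q hq i E (deviate E i S) hE1 hE2)
  · exact cap_subset b q b' i hb' (deviate E i S)
end
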